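/- arXiv:2312.12061 — 10 statements merged into one kernel-verified Lean document; each statement's English description precedes it below -/
import Mathlib

section
/- Let C be a unital C*-algebra and x ∈ C a self-adjoint invertible element. Then for every ε > 0 there exists δ > 0 such that for every self-adjoint y ∈ C with ‖x − y‖ < δ, y is invertible and ‖1_{≥0}(x) − 1_{≥0}(y)‖ < ε, where 1_{≥0} denotes the indicator function of [0,∞) applied via continuous functional calculus. -/
/-- The spectral projection `1_{≥0}(x)` of a self-adjoint element onto `[0, ∞)`,
obtained by applying the indicator function of `[0, ∞)` via the continuous
functional calculus. -/
noncomputable def posSpectralProj {C : Type*} [CStarAlgebra C] (x : C) : C :=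
  cfc (fun t : ℝ => if 0 ≤ t then (1 : ℝ) else 0) x

/-- Let `C` be a unital C*-algebra and `x ∈ C` a self-adjoint invertible
element.  For every `ε > 0` there is `δ > 0` such that every self-adjoint `y` with
`‖x − y‖ < δ` is invertible and `‖1_{≥0}(x) − 1_{≥0}(y)‖ < ε`. -/
theorem stmt0 {C : Type*} [CStarAlgebra C] (x : C)
    (hx : IsSelfAdjoint x) (hxu : IsUnit x) :
    ∀ ε > (0 : ℝ), ∃ δ > (0 : ℝ), ∀ y : C, IsSelfAdjoint y → ‖x - y‖ < δ →
      IsUnit y ∧ ‖posSpectralProj x - posSpectralProj y‖ < ε := by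
  intro ε hε
  obtain hC | hC := subsingleton_or_nontrivial C
  · refine ⟨1, one_pos, fun y hy _ => ⟨?_, ?_⟩⟩
    · exact ⟨⟨y, y, Subsingleton.elim _ _, Subsingleton.elim _ _⟩, rfl⟩
    · simpa [Subsingleton.elim (posSpectralProj x - posSpectralProj y) (0 : C)] using hε
  set u := hxu.unit with hu
  have hux : (u : C) = x := hxu.unit_spec
  have hrpos : (0 : ℝ) < ‖((u⁻¹ : Cˣ) : C)‖ := Units.norm_pos u⁻¹
  set r : ℝ := ‖((u⁻¹ : Cˣ) : C)‖⁻¹ with hrdef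
  have hr : (0 : ℝ) < r := inv_pos.mpr hrpos
  -- spectral gap for `x`
  have hgapx : ∀ t ∈ spectrum ℝ x, r ≤ |t| := by
    intro t ht
    have ht0 : t ≠ 0 := fun h => spectrum.zero_notMem ℝ hxu (h ▸ ht)
    have habs : 0 < |t| := abs_pos.mpr ht0
    have hmem : ((Units.mk0 t ht0 : ℝˣ) : ℝ) ∈ spectrum ℝ ((u : C)) := by rwa [hux]
    rw [spectrum.inv_mem_iff] at hmem
    have hle : ‖(((Units.mk0 t ht0)⁻¹ : ℝˣ) : ℝ)‖ ≤ ‖((u⁻¹ : Cˣ) : C)‖ :=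
      spectrum.norm_le_norm_of_mem hmem
    have hle' : |t|⁻¹ ≤ ‖((u⁻¹ : Cˣ) : C)‖ := by
      simpa [Real.norm_eq_abs, abs_inv] using hle
    have h2 : (1 : ℝ) ≤ |t| * ‖((u⁻¹ : Cˣ) : C)‖ := by
      have := mul_le_mul_of_nonneg_left hle' habs.le
      rwa [mul_inv_cancel₀ habs.ne'] at this
    rw [hrdef, inv_le_iff_one_le_mul₀ hrpos]
    linarith
  -- main perturbation step: nearby self-adjoint elements have spectrum avoiding `(-r/2, r/2)`
  have hstep : ∀ y : C, IsSelfAdjoint y → ‖x - y‖ < r / 2 →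
      ∀ t : ℝ, |t| ≤ r / 2 → t ∉ spectrum ℝ y := by
    intro y hy hxy t ht
    have htx : t ∉ spectrum ℝ x := by
      intro h
      have := hgapx t h
      linarith
    have hBu : IsUnit (algebraMap ℝ C t - x) := spectrum.notMem_iff.mp htx
    set B := hBu.unit with hB
    have hBspec : (B : C) = algebraMap ℝ C t - x := hBu.unit_spec
    have hBsa : IsSelfAdjoint ((B : C)) := by
      rw [hBspec]
      exact (IsSelfAdjoint.algebraMap C (.all (t : ℝ))).sub hx
    have hBinv_sa : IsSelfAdjoint ((B⁻¹ : Cˣ) : C) := by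
      have h1 : ((B⁻¹ : Cˣ) : C) = Ring.inverse ((B : C)) := (Ring.inverse_unit B).symm
      rw [IsSelfAdjoint, h1, ← Ring.inverse_star, hBsa.star_eq]
    -- spectrum of `B⁻¹` is bounded by `2 / r`
    have hspecB : ∀ μ ∈ spectrum ℝ (((B⁻¹ : Cˣ) : C)), ‖μ‖ ≤ 2 / r := by
      intro μ hμ
      have hμ0 : μ ≠ 0 := fun h => spectrum.zero_notMem ℝ (B⁻¹).isUnit (h ▸ hμ)
      have habs : 0 < |μ| := abs_pos.mpr hμ0
      have hmem : ((Units.mk0 μ hμ0 : ℝˣ) : ℝ) ∈ spectrum ℝ (((B⁻¹ : Cˣ) : C)) := hμ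
      rw [spectrum.inv_mem_iff] at hmem
      have h2 : μ⁻¹ ∈ spectrum ℝ ((B : C)) := by simpa using hmem
      rw [hBspec, ← spectrum.singleton_sub_eq] at h2
      rw [Set.mem_sub] at h2
      obtain ⟨a, ha, s, hs, hμeq⟩ := h2
      rw [Set.mem_singleton_iff] at ha
      rw [ha] at hμeq
      have hsr : r ≤ |s| := hgapx s hs
      have hinv : r / 2 ≤ |μ⁻¹| := by
        rw [← hμeq]
        have h3 : |s| - |t| ≤ |t - s| := by
          have := abs_sub_abs_le_abs_sub s t
          rwa [abs_sub_comm] at this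
        linarith
      rw [abs_inv] at hinv
      have h4 : |μ| * (r / 2) ≤ |μ| * |μ|⁻¹ := mul_le_mul_of_nonneg_left hinv habs.le
      rw [mul_inv_cancel₀ habs.ne'] at h4
      rw [Real.norm_eq_abs, le_div_iff₀ hr]
      linarith
    have hnB : ‖((B⁻¹ : Cˣ) : C)‖ ≤ 2 / r := by
      conv_lhs => rw [← cfc_id ℝ ((B⁻¹ : Cˣ) : C) hBinv_sa]
      exact norm_cfc_le (by positivity) (fun μ hμ => hspecB μ hμ)
    -- `algebraMap ℝ C t - y` is a unit since it is near `B`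
    have hnBpos : (0 : ℝ) < ‖((B⁻¹ : Cˣ) : C)‖ := Units.norm_pos B⁻¹
    have hnear : ‖(algebraMap ℝ C t - y) - (B : C)‖ < ‖((B⁻¹ : Cˣ) : C)‖⁻¹ := by
      rw [hBspec]
      have h5 : (algebraMap ℝ C t - y) - (algebraMap ℝ C t - x) = x - y := by abel
      rw [h5]
      have h6 : r / 2 ≤ ‖((B⁻¹ : Cˣ) : C)‖⁻¹ := by
        rw [le_inv_comm₀ (by positivity) hnBpos]
        calc ‖((B⁻¹ : Cˣ) : C)‖ ≤ 2 / r := hnB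
          _ = (r / 2)⁻¹ := by rw [inv_div]
      linarith
    exact spectrum.notMem_iff.mpr (B.ofNearby _ hnear).isUnit
  -- bounds for the spectra
  set M : ℝ := ‖x‖ + r with hM
  have hσx : spectrum ℝ x ⊆ Set.Icc (-M) M := by
    intro t ht
    have h1 := spectrum.norm_le_norm_of_mem ht
    rw [Real.norm_eq_abs] at h1
    rw [Set.mem_Icc, ← abs_le]
    linarith
  -- the continuous function agreeing with the indicator away from `(-r/2, r/2)`
  set f : ℝ → ℝ := fun t => max 0 (min 1 (2 * t / r)) with hfdef
  have hf : Continuous f := by fun_prop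
  have hfg : ∀ t : ℝ, r / 2 ≤ |t| → (if 0 ≤ t then (1 : ℝ) else 0) = f t := by
    intro t ht
    split_ifs with h
    · rw [abs_of_nonneg h] at ht
      have h1 : (1 : ℝ) ≤ 2 * t / r := by
        rw [le_div_iff₀ hr]
        linarith
      simp only [hfdef, min_eq_left h1]
      simp
    · push_neg at h
      have h1 : 2 * t / r ≤ 0 := div_nonpos_of_nonpos_of_nonneg (by linarith) hr.le
      simp only [hfdef]
      rw [min_eq_right (h1.trans zero_le_one), max_eq_left h1]
  -- Weierstrass approximation
  obtain ⟨p, hp⟩ := exists_polynomial_near_of_continuousOn (-M) M f hf.continuousOn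
    (ε / 4) (by positivity)
  -- continuity of polynomial evaluation
  have hcont : ContinuousAt (fun z : C => Polynomial.aeval z p) x :=
    Polynomial.continuousAt_aeval p
  rw [Metric.continuousAt_iff] at hcont
  obtain ⟨δ', hδ', hδ'p⟩ := hcont (ε / 2) (by positivity)
  refine ⟨min δ' (r / 2), lt_min hδ' (by positivity), fun y hy hxy => ?_⟩
  have hxy1 : ‖x - y‖ < δ' := lt_of_lt_of_le hxy (min_le_left _ _)
  have hxy2 : ‖x - y‖ < r / 2 := lt_of_lt_of_le hxy (min_le_right _ _)
  have hgapy : ∀ t ∈ spectrum ℝ y, r / 2 ≤ |t| := by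
    intro t ht
    by_contra hlt
    push_neg at hlt
    exact hstep y hy hxy2 t hlt.le ht
  have hyu : IsUnit y := by
    have h0 : (0 : ℝ) ∉ spectrum ℝ y := hstep y hy hxy2 0 (by simp; positivity)
    exact spectrum.isUnit_of_zero_notMem ℝ h0
  refine ⟨hyu, ?_⟩
  have hσy : spectrum ℝ y ⊆ Set.Icc (-M) M := by
    intro t ht
    have h1 := spectrum.norm_le_norm_of_mem ht
    rw [Real.norm_eq_abs] at h1
    have h2 : ‖y‖ - ‖x‖ ≤ ‖y - x‖ := norm_sub_norm_le y x
    rw [norm_sub_rev] at h2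
    rw [Set.mem_Icc, ← abs_le]
    linarith
  have hPx : posSpectralProj x = cfc f x :=
    cfc_congr fun t ht => hfg t ((half_le_self hr.le).trans (hgapx t ht))
  have hPy : posSpectralProj y = cfc f y :=
    cfc_congr fun t ht => hfg t (hgapy t ht)
  have h1 : ‖cfc f x - Polynomial.aeval x p‖ ≤ ε / 4 := by
    rw [← cfc_polynomial p x hx,
      ← cfc_sub f (fun t => p.eval t) x hf.continuousOn p.continuous.continuousOn]
    refine norm_cfc_le (by positivity) fun t ht => ?_
    have h := hp t (hσx ht)
    rw [Real.norm_eq_abs, abs_sub_comm]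
    exact h.le
  have h2 : ‖cfc f y - Polynomial.aeval y p‖ ≤ ε / 4 := by
    rw [← cfc_polynomial p y hy,
      ← cfc_sub f (fun t => p.eval t) y hf.continuousOn p.continuous.continuousOn]
    refine norm_cfc_le (by positivity) fun t ht => ?_
    have h := hp t (hσy ht)
    rw [Real.norm_eq_abs, abs_sub_comm]
    exact h.le
  have h3 : ‖Polynomial.aeval x p - Polynomial.aeval y p‖ < ε / 2 := by
    have h := hδ'p (x := y) (by rwa [dist_eq_norm, norm_sub_rev])
    rwa [dist_eq_norm, norm_sub_rev] at h
  have key : posSpectralProj x - posSpectralProj y =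
      (cfc f x - Polynomial.aeval x p) + ((Polynomial.aeval x p - Polynomial.aeval y p)
        + (Polynomial.aeval y p - cfc f y)) := by
    rw [hPx, hPy]; abel
  rw [key]
  have h4 := norm_add_le (cfc f x - Polynomial.aeval x p)
    ((Polynomial.aeval x p - Polynomial.aeval y p) + (Polynomial.aeval y p - cfc f y))
  have h5 := norm_add_le (Polynomial.aeval x p - Polynomial.aeval y p)
    (Polynomial.aeval y p - cfc f y)
  have h6 : ‖Polynomial.aeval y p - cfc f y‖ = ‖cfc f y - Polynomial.aeval y p‖ :=
    norm_sub_rev _ _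
  linarith
end

section
/- Let C be a unital C*-algebra, (x_n) a sequence of self-adjoint invertible elements of C, and x ∈ C invertible with x_n → x in norm. Then x is self-adjoint and invertible, and 1_{≥0}(x_n) → 1_{≥0}(x) in norm. -/
/-- If `a` is self-adjoint and its spectrum is at distance at least `δ` from `t`,
then for any `b` with `‖b - a‖ < δ`, `t` is not in the spectrum of `b`. -/
lemma aux_notMem_spectrum {C : Type*} [CStarAlgebra C] {a b : C} (ha : IsSelfAdjoint a)
    {t δ : ℝ} (hδ : 0 < δ) (h : ∀ s ∈ spectrum ℝ a, δ ≤ |s - t|)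
    (hab : ‖b - a‖ < δ) : t ∉ spectrum ℝ b := by
  have hne : ∀ s ∈ spectrum ℝ a, s - t ≠ 0 := fun s hs h' => by
    have := h s hs; rw [h'] at this; simp at this; linarith
  set f : ℝ → ℝ := fun s => (s - t)⁻¹ with hf_def
  have hf : ContinuousOn f (spectrum ℝ a) :=
    ContinuousOn.inv₀ (by fun_prop) hne
  set u : C := cfc f a with hu_def
  have hat : a - algebraMap ℝ C t = cfc (fun s : ℝ => s - t) a := by
    rw [cfc_sub (fun s : ℝ => s) (fun _ => t) a (by fun_prop) (by fun_prop),
      cfc_id' ℝ a, cfc_const t a]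
  have hmul : u * (a - algebraMap ℝ C t) = 1 := by
    rw [hat, hu_def, ← cfc_mul f _ a hf (by fun_prop)]
    rw [show (fun s => f s * (s - t)) = fun s : ℝ => (s - t)⁻¹ * (s - t) from rfl]
    rw [cfc_congr (g := fun _ : ℝ => (1 : ℝ)) fun s hs => inv_mul_cancel₀ (hne s hs)]
    exact cfc_const_one ℝ a
  have hmul' : (a - algebraMap ℝ C t) * u = 1 := by
    rw [hat, hu_def, ← cfc_mul _ f a (by fun_prop) hf]
    rw [cfc_congr (g := fun _ : ℝ => (1 : ℝ)) fun s hs => mul_inv_cancel₀ (hne s hs)]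
    exact cfc_const_one ℝ a
  have hnorm : ‖u‖ ≤ δ⁻¹ := by
    refine norm_cfc_le (by positivity) fun s hs => ?_
    rw [hf_def, norm_inv, Real.norm_eq_abs]
    exact inv_anti₀ hδ (h s hs)
  have hsmall : ‖u * (a - b)‖ < 1 := by
    calc ‖u * (a - b)‖ ≤ ‖u‖ * ‖a - b‖ := norm_mul_le _ _
    _ ≤ δ⁻¹ * ‖a - b‖ := by
        gcongr
    _ < δ⁻¹ * δ := by
        rw [norm_sub_rev]
        exact mul_lt_mul_of_pos_left hab (by positivity)
    _ = 1 := inv_mul_cancel₀ hδ.ne'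
  have hunit1 : IsUnit (1 - u * (a - b)) := (Units.oneSub _ hsmall).isUnit
  have hunitat : IsUnit (a - algebraMap ℝ C t) := ⟨⟨a - algebraMap ℝ C t, u, hmul', hmul⟩, rfl⟩
  have key : (a - algebraMap ℝ C t) * (1 - u * (a - b)) = b - algebraMap ℝ C t := by
    rw [mul_sub, mul_one, ← mul_assoc, hmul', one_mul]
    abel
  have : IsUnit (b - algebraMap ℝ C t) := key ▸ hunitat.mul hunit1
  rw [spectrum.notMem_iff, show (algebraMap ℝ C) t - b = -(b - algebraMap ℝ C t) by abel]
  exact this.neg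

/-- If `(x n)` is a sequence of self-adjoint invertible elements of a unital
C*-algebra converging in norm to an invertible element `x`, then `x` is self-adjoint and
invertible and `1_{≥0}(x n) → 1_{≥0}(x)` in norm. -/
theorem stmt1 {C : Type*} [CStarAlgebra C] (x : ℕ → C)
    (hsa : ∀ n, IsSelfAdjoint (x n)) (hu : ∀ n, IsUnit (x n))
    (l : C) (hl : IsUnit l)
    (hconv : Filter.Tendsto x Filter.atTop (nhds l)) :
    (IsSelfAdjoint l ∧ IsUnit l) ∧
      Filter.Tendsto (fun n => posSpectralProj (x n)) Filter.atTop
        (nhds (posSpectralProj l)) := by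
  have hsal : IsSelfAdjoint l := by
    have h1 : Filter.Tendsto (fun n => star (x n)) Filter.atTop (nhds (star l)) :=
      (continuous_star.tendsto l).comp hconv
    have h2 : (fun n => star (x n)) = x := funext fun n => (hsa n)
    rw [h2] at h1
    exact tendsto_nhds_unique h1 hconv
  refine ⟨⟨hsal, hl⟩, ?_⟩
  rcases subsingleton_or_nontrivial C with hsub | hnt
  · have heq : (fun n => posSpectralProj (x n)) = fun _ => posSpectralProj l :=
      funext fun n => Subsingleton.elim _ _
    rw [heq]; exact tendsto_const_nhds
  -- δ : distance from 0 to the spectrum of l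
  have h0 : (0 : ℝ) ∉ spectrum ℝ l := spectrum.zero_notMem_iff ℝ |>.mpr hl
  obtain ⟨δ, hδpos, hball⟩ :=
    Metric.isOpen_iff.mp (spectrum.isClosed (𝕜 := ℝ) l).isOpen_compl 0 h0
  have hspecl : ∀ s ∈ spectrum ℝ l, δ ≤ |s| := by
    intro s hs
    by_contra hlt
    push_neg at hlt
    exact hball (by simpa [Real.dist_eq] using hlt) hs
  -- the continuous surrogate g for the indicator function
  set g : ℝ → ℝ := fun s => min 1 (max 0 (2 / δ * s)) with hg_def
  have hgc : Continuous g := by fun_prop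
  have hg_eq : ∀ s : ℝ, δ / 2 ≤ |s| → g s = (if 0 ≤ s then (1 : ℝ) else 0) := by
    intro s hs
    rcases le_or_gt (δ / 2) s with h1 | h1
    · have h0s : (0 : ℝ) ≤ s := le_trans (by positivity) h1
      have : (1 : ℝ) ≤ 2 / δ * s := by
        rw [div_mul_eq_mul_div, le_div_iff₀ hδpos]
        linarith
      simp [hg_def, h0s, min_eq_left, le_max_of_le_right this]
    · have hneg : s < 0 := by
        rcases abs_cases s with ⟨he, _⟩ | ⟨he, hn⟩
        · rw [he] at hs; linarith
        · linarith
      have : 2 / δ * s ≤ 0 := mul_nonpos_of_nonneg_of_nonpos (by positivity) hneg.le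
      simp [hg_def, not_le.mpr hneg, max_eq_left this, min_eq_right]
  -- spectra: l
  have hprojl : posSpectralProj l = cfc g l := by
    refine cfc_congr fun s hs => ?_
    exact (hg_eq s (le_trans (by linarith) (hspecl s hs))).symm
  -- eventually, spectra of x n avoid (-δ/2, δ/2)
  have hspecx : ∀ n, ‖x n - l‖ < δ / 2 → ∀ s ∈ spectrum ℝ (x n), δ / 2 ≤ |s| := by
    intro n hn s hs
    by_contra hlt
    push_neg at hlt
    refine aux_notMem_spectrum hsal (δ := δ / 2) (by positivity) ?_ hn hs
    intro r hr
    have := hspecl r hr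
    have habs : |r| - |s| ≤ |r - s| := abs_sub_abs_le_abs_sub r s
    linarith
  have hprojx : ∀ n, ‖x n - l‖ < δ / 2 → posSpectralProj (x n) = cfc g (x n) := by
    intro n hn
    exact cfc_congr fun s hs => (hg_eq s (hspecx n hn s hs)).symm
  -- uniform norm bound
  set M : ℝ := ‖l‖ + 1 with hM_def
  have hMpos : 0 < M := by positivity
  -- key approximation estimate
  have hest : ∀ ε : ℝ, 0 < ε → ∀ p : Polynomial ℝ,
      (∀ s ∈ Set.Icc (-M) M, |Polynomial.eval s p - g s| < ε) →
      ∀ a : C, IsSelfAdjoint a → ‖a‖ ≤ M → ‖cfc g a - Polynomial.aeval a p‖ ≤ ε := by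
    intro ε hε p hp a ha haM
    have hspec : ∀ s ∈ spectrum ℝ a, s ∈ Set.Icc (-M) M := by
      intro s hs
      have := spectrum.norm_le_norm_of_mem hs
      rw [Real.norm_eq_abs] at this
      constructor <;> [skip; skip] <;> rcases abs_le.mp (this.trans haM) with ⟨h1, h2⟩
      · exact h1
      · exact h2
    rw [← cfc_polynomial p a, ← cfc_sub g p.eval a hgc.continuousOn (by fun_prop)]
    refine norm_cfc_le hε.le fun s hs => ?_
    rw [Real.norm_eq_abs, abs_sub_comm]
    exact (hp s (hspec s hs)).le
  -- main convergence
  rw [Metric.tendsto_atTop]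
  intro ε hε
  obtain ⟨p, hp⟩ := exists_polynomial_near_of_continuousOn (-M) M g
    hgc.continuousOn (ε / 3) (by positivity)
  have hpoly : Filter.Tendsto (fun n => Polynomial.aeval (x n) p) Filter.atTop
      (nhds (Polynomial.aeval l p)) :=
    (p.continuous_aeval.tendsto l).comp hconv
  have hnear : ∀ᶠ n in Filter.atTop, ‖x n - l‖ < min (δ / 2) 1 := by
    have := Metric.tendsto_atTop.mp hconv
    obtain ⟨N, hN⟩ := this (min (δ / 2) 1) (by positivity)
    exact Filter.eventually_atTop.mpr ⟨N, fun n hn => by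
      simpa [dist_eq_norm] using hN n hn⟩
  have hpolynear : ∀ᶠ n in Filter.atTop,
      dist (Polynomial.aeval (x n) p) (Polynomial.aeval l p) < ε / 3 :=
    Metric.tendsto_nhds.mp hpoly (ε / 3) (by positivity)
  obtain ⟨N, hN⟩ := Filter.eventually_atTop.mp (hnear.and hpolynear)
  refine ⟨N, fun n hn => ?_⟩
  obtain ⟨hn1, hn2⟩ := hN n hn
  have hnδ : ‖x n - l‖ < δ / 2 := hn1.trans_le (min_le_left _ _)
  have hnM : ‖x n‖ ≤ M := by
    have h1 : ‖x n - l‖ < 1 := hn1.trans_le (min_le_right _ _)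
    calc ‖x n‖ = ‖x n - l + l‖ := by rw [sub_add_cancel]
    _ ≤ ‖x n - l‖ + ‖l‖ := norm_add_le _ _
    _ ≤ M := by rw [hM_def]; linarith
  have hlM : ‖l‖ ≤ M := by rw [hM_def]; linarith
  rw [dist_eq_norm, hprojx n hnδ, hprojl]
  have e1 := hest (ε / 3) (by positivity) p hp (x n) (hsa n) hnM
  have e2 := hest (ε / 3) (by positivity) p hp l hsal hlM
  rw [dist_eq_norm] at hn2
  calc ‖cfc g (x n) - cfc g l‖
      = ‖(cfc g (x n) - Polynomial.aeval (x n) p) +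
          (Polynomial.aeval (x n) p - Polynomial.aeval l p) +
          (Polynomial.aeval l p - cfc g l)‖ := by congr 1; abel
    _ ≤ ‖cfc g (x n) - Polynomial.aeval (x n) p‖ +
          ‖Polynomial.aeval (x n) p - Polynomial.aeval l p‖ +
          ‖Polynomial.aeval l p - cfc g l‖ := norm_add₃_le
    _ < ε / 3 + ε / 3 + ε / 3 := by
        rw [← norm_neg (Polynomial.aeval l p - cfc g l), neg_sub]
        refine add_lt_add_of_lt_of_le (add_lt_add_of_le_of_lt e1 hn2) e2
    _ = ε := by ring
end

section
/- Let C be a unital C*-algebra and J ⊆ C a closed two-sided ideal. Then every positive invertible element of C/J lifts to a positive invertible element of C. -/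
open scoped CStarAlgebra

/-- Every positive invertible element of a quotient `C/J` of a unital
C*-algebra `C` by a closed two-sided ideal `J` lifts to a positive invertible element of `C`.

The quotient is encoded by a surjective unital `*`-homomorphism `φ : C → D` between unital
C*-algebras (`D ≅ C/ker φ`, and kernels of `*`-homomorphisms are exactly the closed two-sided
ideals).  Positivity of `a` is encoded as `a = star b * b` for some `b`, which for C*-algebras
is equivalent to `a ≥ 0`. -/
theorem stmt3 {C D : Type*} [CStarAlgebra C] [CStarAlgebra D]
    (φ : C →⋆ₐ[ℂ] D) (hφ : Function.Surjective φ)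
    (a : D) (ha_pos : ∃ b : D, a = star b * b) (ha_inv : IsUnit a) :
    ∃ A : C, (∃ b : C, A = star b * b) ∧ IsUnit A ∧ φ A = a := by
  cases subsingleton_or_nontrivial D with
  | inl h =>
    exact ⟨1, ⟨1, by simp⟩, isUnit_one, Subsingleton.elim _ _⟩
  | inr h =>
  obtain ⟨b, rfl⟩ := ha_pos
  obtain ⟨c, rfl⟩ := hφ b
  have ha_sa : IsSelfAdjoint (star (φ c) * φ c) := .star_mul_self (φ c)
  have ha_spec_nonneg : ∀ x ∈ spectrum ℝ (star (φ c) * φ c), 0 ≤ x :=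
    spectrum_star_mul_self_nonneg
  have h0 : (0 : ℝ) ∉ spectrum ℝ (star (φ c) * φ c) :=
    spectrum.zero_notMem_iff ℝ |>.mpr ha_inv
  have hne : (spectrum ℝ (star (φ c) * φ c)).Nonempty := ha_sa.spectrum_nonempty
  have hcpt : IsCompact (spectrum ℝ (star (φ c) * φ c)) := spectrum.isCompact _
  obtain ⟨ε, hε_mem, hε_min⟩ : ∃ ε ∈ spectrum ℝ (star (φ c) * φ c),
      ∀ x ∈ spectrum ℝ (star (φ c) * φ c), ε ≤ x :=
    hcpt.exists_isMinOn hne (continuous_id.continuousOn)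
  have hε_pos : 0 < ε := lt_of_le_of_ne (ha_spec_nonneg ε hε_mem) fun h' => h0 (h' ▸ hε_mem)
  -- the lift: apply `f t = max t ε` to `star c * c`
  have hT_sa : IsSelfAdjoint (star c * c) := .star_mul_self c
  have hf_cont : Continuous (fun t : ℝ => max t ε) := continuous_id.max continuous_const
  have hg_cont : Continuous (fun t : ℝ => Real.sqrt (max t ε)) :=
    Real.continuous_sqrt.comp hf_cont
  refine ⟨cfc (fun t : ℝ => max t ε) (star c * c), ?_, ?_, ?_⟩
  · -- positivity
    refine ⟨cfc (fun t : ℝ => Real.sqrt (max t ε)) (star c * c), ?_⟩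
    have hsa : IsSelfAdjoint (cfc (fun t : ℝ => Real.sqrt (max t ε)) (star c * c)) :=
      cfc_predicate _ _
    rw [hsa.star_eq, ← cfc_mul _ _ _ hg_cont.continuousOn hg_cont.continuousOn]
    refine cfc_congr fun x _ => ?_
    exact (Real.mul_self_sqrt (le_max_of_le_right hε_pos.le)).symm
  · -- invertibility
    exact isUnit_cfc_iff _ _ hf_cont.continuousOn hT_sa |>.mpr
      fun x _ => (lt_of_lt_of_le hε_pos (le_max_right x ε)).ne'
  · -- maps to `a`
    have hφT : φ (star c * c) = star (φ c) * φ c := by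
      rw [map_mul, map_star]
    have hφa_sa : IsSelfAdjoint (φ (star c * c)) := hφT ▸ ha_sa
    rw [StarAlgHom.map_cfc φ _ _ hf_cont.continuousOn (map_continuous φ) hT_sa hφa_sa, hφT]
    have : cfc (fun t : ℝ => max t ε) (star (φ c) * φ c)
        = cfc (id : ℝ → ℝ) (star (φ c) * φ c) :=
      cfc_congr fun x hx => max_eq_left (hε_min x hx)
    rw [this, cfc_id ℝ _]
end

section
/- Let C be a unital C*-algebra, J ⊆ C a closed two-sided ideal, and a ∈ C/J a self-adjoint invertible element. Then a lifts to a self-adjoint invertible element of C if and only if the projection 1_{≥0}(a) lifts to a projection in C. -/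
open scoped CStarAlgebra

lemma step_contOn (c d : ℝ) {s : Set ℝ} (hs : (0:ℝ) ∉ s) :
    ContinuousOn (fun t : ℝ => if 0 ≤ t then c else d) s := by
  intro x hx
  have hx0 : x ≠ 0 := fun h => hs (h ▸ hx)
  apply ContinuousAt.continuousWithinAt
  rcases hx0.lt_or_gt with h | h
  · have he : (fun t : ℝ => if 0 ≤ t then c else d) =ᶠ[nhds x] fun _ => d := by
      filter_upwards [Iio_mem_nhds h] with t ht
      simp [not_le.mpr (Set.mem_Iio.mp ht)]
    exact continuousAt_const.congr he.symm
  · have he : (fun t : ℝ => if 0 ≤ t then c else d) =ᶠ[nhds x] fun _ => c := by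
      filter_upwards [Ioi_mem_nhds h] with t ht
      simp [le_of_lt (Set.mem_Ioi.mp ht)]
    exact continuousAt_const.congr he.symm

/-- `cfc` of a self-adjoint element commutes with anything commuting with the element. -/
lemma commute_cfc {C : Type*} [CStarAlgebra C] {a b : C} (ha : IsSelfAdjoint a)
    (hb : Commute b a) (f : ℝ → ℝ) : Commute b (cfc f a) := by
  by_cases hf : ContinuousOn f (spectrum ℝ a)
  · rw [cfc_apply f a ha hf]
    generalize (⟨_, hf.restrict⟩ : C(spectrum ℝ a, ℝ)) = g
    induction g using ContinuousMap.induction_on_of_compact with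
    | const r =>
        have : (ContinuousMap.const (spectrum ℝ a) r) = algebraMap ℝ C(spectrum ℝ a, ℝ) r := rfl
        rw [this, AlgHomClass.commutes]
        exact (Commute.symm (Algebra.commutes r b))
    | id => rw [cfcHom_id ha]; exact hb
    | star_id =>
        rw [show star (ContinuousMap.restrict (spectrum ℝ a) (ContinuousMap.id ℝ))
          = ContinuousMap.restrict (spectrum ℝ a) (ContinuousMap.id ℝ) from star_trivial _,
          cfcHom_id ha]
        exact hb
    | add f g hf hg => rw [map_add]; exact hf.add_right hg
    | mul f g hf hg => rw [map_mul]; exact hf.mul_right hg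
    | frequently g hfreq =>
        have hcl : IsClosed {x : C | Commute b x} :=
          isClosed_eq (continuous_mul_left b) (continuous_mul_right b)
        have hc : IsClosed {g : C(spectrum ℝ a, ℝ) | Commute b (cfcHom ha g)} :=
          hcl.preimage (cfcHom_isClosedEmbedding ha).continuous
        exact hc.closure_subset (mem_closure_iff_frequently.mpr hfreq)
  · rw [cfc_apply_of_not_continuousOn a hf]; exact Commute.zero_right b

lemma zero_not_mem_spec {C : Type*} [CStarAlgebra C] {x : C} (hxu : IsUnit x) :
    (0:ℝ) ∉ spectrum ℝ x := spectrum.zero_notMem_iff ℝ |>.mpr hxu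

lemma posSpectralProj_isSelfAdjoint {C : Type*} [CStarAlgebra C] (x : C) :
    IsSelfAdjoint (posSpectralProj x) := cfc_predicate _ x

lemma posSpectralProj_isIdempotentElem {C : Type*} [CStarAlgebra C] {x : C}
    (hx : IsSelfAdjoint x) (hxu : IsUnit x) : IsIdempotentElem (posSpectralProj x) := by
  have h0 := zero_not_mem_spec hxu
  have hc := step_contOn 1 0 h0
  unfold IsIdempotentElem posSpectralProj
  rw [← cfc_mul _ _ x hc hc]
  exact cfc_congr fun t _ => by by_cases h : 0 ≤ t <;> simp [h]

lemma map_posSpectralProj {C D : Type*} [CStarAlgebra C] [CStarAlgebra D]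
    (φ : C →⋆ₐ[ℂ] D) {x : C} (hx : IsSelfAdjoint x) (hxu : IsUnit x) :
    φ (posSpectralProj x) = posSpectralProj (φ x) := by
  have h0 := zero_not_mem_spec hxu
  exact φ.map_cfc _ x (step_contOn 1 0 h0) (map_continuous φ) hx (hx.map φ)

/-- Let `a` be a self-adjoint invertible element of a quotient `C/J` of a
unital C*-algebra `C` by a closed two-sided ideal `J`.  Then `a` lifts to a self-adjoint
invertible element of `C` iff the projection `1_{≥0}(a)` lifts to a projection in `C`.

The quotient is encoded by a surjective unital `*`-homomorphism `φ : C → D` between unital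
C*-algebras (`D ≅ C/ker φ`); a projection is a self-adjoint idempotent. -/
theorem stmt4 {C D : Type*} [CStarAlgebra C] [CStarAlgebra D]
    (φ : C →⋆ₐ[ℂ] D) (hφ : Function.Surjective φ)
    (a : D) (ha : IsSelfAdjoint a) (hau : IsUnit a) :
    (∃ A : C, IsSelfAdjoint A ∧ IsUnit A ∧ φ A = a) ↔
      (∃ P : C, IsSelfAdjoint P ∧ IsIdempotentElem P ∧ φ P = posSpectralProj a) := by
  constructor
  · rintro ⟨A, hA, hAu, rfl⟩
    exact ⟨posSpectralProj A, posSpectralProj_isSelfAdjoint A,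
      posSpectralProj_isIdempotentElem hA hAu, map_posSpectralProj φ hA hAu⟩
  · rintro ⟨P, hP, hP2, hφP⟩
    have h0a : (0:ℝ) ∉ spectrum ℝ a := zero_not_mem_spec hau
    set f : ℝ → ℝ := fun t => if 0 ≤ t then 1 else 0 with hfdef
    set g : ℝ → ℝ := fun t => if 0 ≤ t then 1 else -1 with hgdef
    have hfc : ContinuousOn f (spectrum ℝ a) := step_contOn 1 0 h0a
    have hgc : ContinuousOn g (spectrum ℝ a) := step_contOn 1 (-1) h0a
    -- spectral gap
    obtain ⟨ε, hε, hball⟩ : ∃ ε > 0, Metric.ball (0:ℝ) ε ⊆ (spectrum ℝ a)ᶜ :=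
      Metric.isOpen_iff.mp (spectrum.isClosed a).isOpen_compl 0 h0a
    have hgap : ∀ t ∈ spectrum ℝ a, ε ≤ |t| := by
      intro t ht
      by_contra hlt
      exact (hball (by simpa [Real.dist_eq] using not_le.mp hlt)) ht
    -- self-adjoint lift of a
    obtain ⟨b, hb⟩ := hφ a
    set B : C := (2⁻¹ : ℂ) • (b + star b) with hBdef
    have hBsa : IsSelfAdjoint B := by
      simp [hBdef, IsSelfAdjoint, star_smul, star_add, star_star, add_comm]
    have hφB : φ B = a := by
      rw [hBdef, map_smul, map_add, map_star, hb, ha.star_eq, ← two_smul ℂ a, smul_smul]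
      norm_num
    -- p and u in D
    set p : D := posSpectralProj a with hpdef
    have hpcfc : p = cfc f a := rfl
    set u : D := cfc g a with hudef
    have hp2 : p * p = p := posSpectralProj_isIdempotentElem ha hau
    have hpa : Commute p a := by
      have := cfc_commute_cfc f (id : ℝ → ℝ) a
      rwa [cfc_id ℝ a, ← hpcfc] at this
    have hup : u = p + p - 1 := by
      have h1 : u = cfc (fun t => (f t + f t) - 1) a :=
        cfc_congr fun t _ => by by_cases h : 0 ≤ t <;> simp [hfdef, hgdef, h] <;> norm_num
      rw [h1, cfc_sub (fun t => f t + f t) (fun _ => (1:ℝ)) a (hfc.add hfc) (by fun_prop),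
        cfc_add _ _ (hf := hfc) (hg := hfc), ← hpcfc, cfc_const 1 a, map_one]
    -- U in C
    set U : C := P + P - 1 with hUdef
    have hUsa : IsSelfAdjoint U := by
      simp [hUdef, IsSelfAdjoint, star_sub, star_add, hP.star_eq]
    have hU2 : U * U = 1 := by
      simp only [hUdef, mul_sub, sub_mul, add_mul, mul_add, mul_one, one_mul, hP2.eq]
      abel
    have hUu : IsUnit U := ⟨⟨U, U, hU2, hU2⟩, rfl⟩
    have hφU : φ U = u := by
      rw [hUdef, map_sub, map_add, map_one, hφP]
      exact hup.symm
    -- M in C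
    set M : C := P * B * P + (1 - P) * B * (1 - P) with hMdef
    have hP1 : ((1:C) - P) * P = 0 := by rw [sub_mul, one_mul, hP2.eq, sub_self]
    have hP1' : P * ((1:C) - P) = 0 := by rw [mul_sub, mul_one, hP2.eq, sub_self]
    have h1Psa : IsSelfAdjoint ((1:C) - P) := by
      simp [IsSelfAdjoint, star_sub, hP.star_eq]
    have hMsa : IsSelfAdjoint M := by
      rw [hMdef, IsSelfAdjoint, star_add, star_mul, star_mul, star_mul, star_mul,
        hP.star_eq, hBsa.star_eq, h1Psa.star_eq]
      noncomm_ring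
    have hMP : M * P = P * M := by
      have e1 : M * P = P * B * P := by
        rw [hMdef, add_mul]
        rw [show P * B * P * P = P * B * (P * P) by noncomm_ring, hP2.eq]
        rw [show (1 - P) * B * (1 - P) * P = ((1:C) - P) * B * ((1 - P) * P) by noncomm_ring,
          hP1, mul_zero, add_zero]
      have e2 : P * M = P * B * P := by
        rw [hMdef, mul_add]
        rw [show P * (P * B * P) = P * P * B * P by noncomm_ring, hP2.eq]
        rw [show P * ((1 - P) * B * (1 - P)) = (P * ((1:C) - P)) * (B * (1 - P)) by noncomm_ring,
          hP1', zero_mul, add_zero]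
      rw [e1, e2]
    have hMU : Commute M U := by
      show M * U = U * M
      simp only [hUdef, mul_sub, sub_mul, mul_add, add_mul, mul_one, one_mul, hMP]
    have hφM : φ M = a := by
      have e : φ M = p * a * p + (1 - p) * a * (1 - p) := by
        simp [hMdef, map_add, map_mul, map_sub, map_one, hφP, hφB, ← hpdef]
      have h5 : (1 - p) * a = a * (1 - p) := by
        rw [sub_mul, mul_sub, one_mul, mul_one, hpa.eq]
      have h6 : ((1:D) - p) * (1 - p) = 1 - p := by
        simp only [mul_sub, sub_mul, one_mul, mul_one, hp2]
        abel
      rw [e, hpa.eq, h5, mul_assoc, mul_assoc, hp2, h6, ← mul_add,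
        show p + ((1:D) - p) = 1 by abel, mul_one]
    -- X = M * U
    set X : C := M * U with hXdef
    have hUX : Commute U X := by
      show U * X = X * U
      calc U * (M * U) = (U * M) * U := (mul_assoc _ _ _).symm
        _ = (M * U) * U := by rw [← hMU.eq]
    have hXsa : IsSelfAdjoint X := by
      rw [hXdef, IsSelfAdjoint, star_mul, hUsa.star_eq, hMsa.star_eq]
      exact hMU.symm.eq
    have habsc : ContinuousOn (fun t : ℝ => |t|) (spectrum ℝ a) := continuous_abs.continuousOn
    have hXa : φ X = a * u := by rw [hXdef, map_mul, hφM, hφU]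
    have habs : φ X = cfc (fun t : ℝ => |t|) a := by
      rw [hXa]
      have h1 : a * u = cfc (fun t : ℝ => t * g t) a := by
        conv_lhs => rw [← cfc_id' ℝ a]
        exact (cfc_mul _ _ a (by fun_prop) hgc).symm
      rw [h1]
      refine cfc_congr fun t _ => ?_
      by_cases h : 0 ≤ t
      · simp [hgdef, h, abs_of_nonneg h]
      · simp [hgdef, h, abs_of_neg (not_le.mp h)]
    -- Y = (max · ε) applied to X
    set Y : C := cfc (fun t : ℝ => max t ε) X with hYdef
    have hmaxc : Continuous (fun t : ℝ => max t ε) := continuous_id.max continuous_const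
    have hYsa : IsSelfAdjoint Y := cfc_predicate _ X
    have hYu : IsUnit Y := by
      rw [← spectrum.zero_notMem_iff ℝ, hYdef,
        cfc_map_spectrum (R := ℝ) _ X hXsa hmaxc.continuousOn]
      rintro ⟨t, -, hmax⟩
      exact hε.not_ge (hmax ▸ le_max_right t ε)
    have hUY : Commute U Y := commute_cfc hXsa hUX _
    have hφY : φ Y = φ X := by
      rw [hYdef, φ.map_cfc _ X hmaxc.continuousOn (map_continuous φ) hXsa (hXsa.map φ), habs]
      have key : ∀ s ∈ spectrum ℝ (cfc (fun t : ℝ => |t|) a), max s ε = s := by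
        intro s hs
        rw [cfc_map_spectrum (R := ℝ) _ a ha habsc] at hs
        obtain ⟨t, ht, rfl⟩ := hs
        exact max_eq_left (hgap t ht)
      calc cfc (fun t => max t ε) (cfc (fun t : ℝ => |t|) a)
          = cfc (fun s : ℝ => s) (cfc (fun t : ℝ => |t|) a) := cfc_congr key
        _ = _ := cfc_id' ℝ _ (cfc_predicate _ a)
    -- the lift
    refine ⟨Y * U, ?_, hYu.mul hUu, ?_⟩
    · rw [IsSelfAdjoint, star_mul, hUsa.star_eq, hYsa.star_eq]
      exact hUY.eq
    · have huu : u * u = 1 := by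
        rw [hudef, ← cfc_mul g g a hgc hgc,
          show (fun t => g t * g t) = fun _ : ℝ => (1:ℝ) from
            funext fun t => by by_cases h : 0 ≤ t <;> simp [hgdef, h],
          cfc_const 1 a, map_one]
      rw [map_mul, hφY, hφU, hXa, mul_assoc, huu, mul_one]
end

section
/- Let 0 < ε < 1/2, let C be a unital C*-algebra and J ⊆ C a closed two-sided ideal. If u ∈ C/J is a unitary with ‖u − 1‖ < ε, then there exists a unitary U ∈ C with π(U) = u and ‖U − 1‖ < ε. -/
open Complex

private lemma stmt5_norm_exp_I_sub_one (x : ℝ) :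
    ‖Complex.exp (x * Complex.I) - 1‖ = 2 * |Real.sin (x / 2)| := by
  have h : Complex.exp (x * Complex.I) - 1
      = Complex.ofReal (Real.cos x - 1) + Complex.ofReal (Real.sin x) * Complex.I := by
    rw [Complex.exp_mul_I]
    push_cast
    ring
  have h2 : |Real.sin (x / 2)| ^ 2 = (1 - Real.cos x) / 2 := by
    rw [Real.abs_sin_half, Real.sq_sqrt (by nlinarith [Real.cos_le_one x])]
  have h3 : (Real.cos x - 1) ^ 2 + Real.sin x ^ 2 = (2 * |Real.sin (x / 2)|) ^ 2 := by
    nlinarith [Real.sin_sq_add_cos_sq x, h2]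
  rw [h, Complex.norm_def, Complex.normSq_add_mul_I, h3,
    Real.sqrt_sq (by positivity)]

private lemma stmt5_abs_sin_half (x : ℝ) (hx : |x| ≤ Real.pi) :
    |Real.sin (x / 2)| = Real.sin (|x| / 2) := by
  rw [eq_comm, ← _root_.abs_of_nonneg (Real.sin_nonneg_of_nonneg_of_le_pi (by positivity)
    (by linarith [Real.pi_pos])), Real.abs_sin_half, Real.abs_sin_half, Real.cos_abs]

private lemma stmt5_sin_mono {x m : ℝ} (h : |x| ≤ m) (hm : m ≤ Real.pi) :
    2 * |Real.sin (x / 2)| ≤ 2 * Real.sin (m / 2) := by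
  have h0 : 0 ≤ m := (abs_nonneg x).trans h
  rw [stmt5_abs_sin_half x (h.trans hm)]
  have hmem1 : |x| / 2 ∈ Set.Icc (-(Real.pi / 2)) (Real.pi / 2) := by
    constructor
    · have := abs_nonneg x; have := Real.pi_pos; linarith
    · linarith
  have hmem2 : m / 2 ∈ Set.Icc (-(Real.pi / 2)) (Real.pi / 2) := by
    constructor
    · have := Real.pi_pos; linarith
    · linarith
  have := Real.strictMonoOn_sin.monotoneOn hmem1 hmem2 (by linarith)
  linarith

/-- Let `0 < ε < 1/2`, `C` a unital C*-algebra and `J` a closed two-sided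
ideal.  Any unitary `u ∈ C/J` with `‖u − 1‖ < ε` lifts to a unitary `U ∈ C` with
`‖U − 1‖ < ε`.

The quotient is encoded by a surjective unital `*`-homomorphism `φ : C → D` between unital
C*-algebras (`D ≅ C/ker φ`). -/
theorem stmt5 {C D : Type*} [CStarAlgebra C] [CStarAlgebra D]
    (φ : C →⋆ₐ[ℂ] D) (hφ : Function.Surjective φ)
    (ε : ℝ) (hε0 : 0 < ε) (hε : ε < 1 / 2)
    (u : D) (hu : u ∈ unitary D) (hu1 : ‖u - 1‖ < ε) :
    ∃ U : C, U ∈ unitary C ∧ φ U = u ∧ ‖U - 1‖ < ε := by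
  rcases subsingleton_or_nontrivial D with hD | hD
  · exact ⟨1, one_mem _, Subsingleton.elim _ _, by simpa using hε0⟩
  have hCnt : Nontrivial C := by
    refine nontrivial_of_ne 0 1 fun h => zero_ne_one (α := D) ?_
    rw [← map_zero φ, ← map_one φ, h]
  have : NormOneClass D := ⟨CStarRing.norm_one⟩
  have : NormOneClass C := ⟨CStarRing.norm_one⟩
  have hnu : IsStarNormal u := isStarNormal_of_mem_unitary hu
  set r : ℝ := ‖u - 1‖ with hr_def
  have hr0 : 0 ≤ r := norm_nonneg _
  have hrε : r < ε := hu1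
  have hrhalf : r < 1 / 2 := lt_trans hrε hε
  -- spectrum facts
  have habs1 : ∀ z ∈ spectrum ℂ u, ‖z‖ = 1 := by
    intro z hz
    have h1 := spectrum_subset_unitary_of_mem_unitary hu hz
    have : ‖z‖ = 1 := by
      have h2 := Unitary.star_mul_self_of_mem h1
      have h3 : (starRingEnd ℂ) z * z = 1 := h2
      have h4 : Complex.normSq z = 1 := by
        have h5 : ((Complex.normSq z : ℝ) : ℂ) = 1 :=
          (Complex.normSq_eq_conj_mul_self (z := z)).trans h3
        exact_mod_cast h5
      rw [Complex.norm_def, h4, Real.sqrt_one]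
    simpa using this
  have hdist : ∀ z ∈ spectrum ℂ u, ‖z - 1‖ ≤ r := by
    intro z hz
    have h1 : z - 1 ∈ spectrum ℂ (u - algebraMap ℂ D 1) := by
      rw [← spectrum.sub_singleton_eq]
      exact Set.sub_mem_sub hz rfl
    rw [map_one] at h1
    exact spectrum.norm_le_norm_of_mem h1
  have hexp_eq : ∀ z ∈ spectrum ℂ u, Complex.exp (Complex.arg z * Complex.I) = z := by
    intro z hz
    conv_rhs => rw [← Complex.norm_mul_exp_arg_mul_I z]
    rw [habs1 z hz]
    simp
  -- the angle bound
  set m : ℝ := 2 * Real.arcsin (r / 2) with hm_def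
  have hm0 : 0 ≤ m := by
    have := Real.arcsin_nonneg.mpr (by linarith : (0:ℝ) ≤ r / 2)
    simp only [hm_def]; linarith
  have hmpi : m ≤ Real.pi := by
    have := Real.arcsin_le_pi_div_two (r / 2)
    simp only [hm_def]; linarith
  have hsinm : Real.sin (m / 2) = r / 2 := by
    have : m / 2 = Real.arcsin (r / 2) := by rw [hm_def]; ring
    rw [this, Real.sin_arcsin (by linarith) (by linarith)]
  have harg : ∀ z ∈ spectrum ℂ u, |Complex.arg z| ≤ m := by
    intro z hz
    have h1 : ‖Complex.exp (Complex.arg z * Complex.I) - 1‖ ≤ r := by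
      rw [hexp_eq z hz]; exact hdist z hz
    rw [stmt5_norm_exp_I_sub_one] at h1
    have h2 : Real.sin (|Complex.arg z| / 2) ≤ r / 2 := by
      rw [← stmt5_abs_sin_half _ (Complex.abs_arg_le_pi z)]; linarith
    have h3 : |Complex.arg z| / 2 ≤ Real.arcsin (r / 2) := by
      have h4 : |Complex.arg z| / 2 = Real.arcsin (Real.sin (|Complex.arg z| / 2)) := by
        rw [Real.arcsin_sin (by linarith [Real.pi_pos, abs_nonneg (Complex.arg z)]) (by linarith [Complex.abs_arg_le_pi z])]
      rw [h4]
      exact Real.monotone_arcsin h2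
    simp only [hm_def]; linarith
  -- the logarithm of u
  have hcont_arg : ContinuousOn (fun z : ℂ => (Complex.arg z : ℂ)) (spectrum ℂ u) := by
    intro z hz
    have hre : 0 < z.re := by
      have h1 := hdist z hz
      have h2 : |z.re - 1| ≤ ‖z - 1‖ := by
        simpa using Complex.abs_re_le_norm (z - 1)
      have := neg_abs_le (z.re - 1)
      linarith
    exact (Complex.continuous_ofReal.continuousAt.comp
      (Complex.continuousAt_arg (Complex.mem_slitPlane_iff.mpr (Or.inl hre)))).continuousWithinAt
  set a := cfc (fun z : ℂ => (Complex.arg z : ℂ)) u with ha_def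
  have ha_sa : IsSelfAdjoint a := by
    rw [IsSelfAdjoint, ha_def, ← cfc_star]
    exact cfc_congr fun z _ => by simp [Complex.conj_ofReal]
  have hspec_a : spectrum ℂ a = (fun z : ℂ => (Complex.arg z : ℂ)) '' spectrum ℂ u :=
    cfc_map_spectrum _ u hnu hcont_arg
  -- lift a to a selfadjoint element b
  obtain ⟨b₀, hb₀⟩ := hφ a
  set b : C := (2 : ℂ)⁻¹ • (b₀ + star b₀) with hb_def
  have hb_sa : IsSelfAdjoint b := by
    rw [IsSelfAdjoint, hb_def, star_smul, star_add, star_star]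
    simp [add_comm]
  have hφc : Continuous φ :=
    AddMonoidHomClass.continuous_of_bound φ 1
      (fun x => by simpa using NonUnitalStarAlgHom.norm_apply_le φ x)
  have hφb : φ b = a := by
    rw [hb_def, map_smul, map_add, map_star, hb₀, ha_sa.star_eq, ← two_smul ℂ a, smul_smul]
    norm_num
  -- bound the real spectrum of a
  have hσa : ∀ t : ℝ, t ∈ spectrum ℝ a → |t| ≤ m := by
    intro t ht
    have h1 : (algebraMap ℝ ℂ) t ∈ spectrum ℂ a := (spectrum.algebraMap_mem_iff ℂ).mpr ht
    rw [hspec_a] at h1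
    obtain ⟨z, hz, hzt⟩ := h1
    have h2 : t = Complex.arg z := by
      have : ((Complex.arg z : ℝ) : ℂ) = ((t : ℝ) : ℂ) := hzt
      exact_mod_cast this.symm
    rw [h2]
    exact harg z hz
  -- clamp b
  set g : ℝ → ℝ := fun t => max (-m) (min m t) with hg_def
  have hg_cont : Continuous g := by fun_prop
  have hg_bound : ∀ t : ℝ, |g t| ≤ m := by
    intro t
    rw [abs_le]
    constructor
    · exact le_max_left _ _
    · exact max_le (by linarith) (min_le_left _ _)
  set b' : C := cfc g b with hb'_def
  have hb'_sa : IsSelfAdjoint b' := cfc_predicate g b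
  have hb'_n : IsStarNormal b' := hb'_sa.isStarNormal
  have hφb' : φ b' = a := by
    have h1 : φ (cfc g b) = cfc g (φ b) :=
      StarAlgHom.map_cfc φ g b hg_cont.continuousOn hφc hb_sa (by rw [hφb]; exact ha_sa)
    rw [hb'_def, h1, hφb]
    have h2 : cfc g a = cfc (id : ℝ → ℝ) a := by
      apply cfc_congr
      intro t ht
      obtain ⟨h3, h4⟩ := abs_le.mp (hσa t ht)
      simp only [hg_def, id]
      rw [min_eq_right h4, max_eq_right h3]
    rw [h2, cfc_id ℝ a ha_sa]
  have hb'_norm : ‖b'‖ ≤ m := by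
    rw [hb'_def]
    exact norm_cfc_le hm0 fun t _ => by simpa using hg_bound t
  -- the lifted unitary
  set f : ℂ → ℂ := fun z => Complex.exp (z * Complex.I) with hf_def
  have hf_cont : Continuous f :=
    Complex.continuous_exp.comp (continuous_id.mul continuous_const)
  set U : C := cfc f b' with hU_def
  refine ⟨U, ?_, ?_, ?_⟩
  · -- U is unitary
    rw [hU_def, cfc_unitary_iff f b' hb'_n hf_cont.continuousOn]
    intro x hx
    have hxre : x = (x.re : ℂ) := hb'_sa.mem_spectrum_eq_re hx
    rw [hxre]
    have h1 : star (f ((x.re : ℝ) : ℂ)) = Complex.exp (-(((x.re : ℝ) : ℂ) * Complex.I)) := by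
      simp only [hf_def, RCLike.star_def, ← Complex.exp_conj, map_mul, Complex.conj_ofReal,
        Complex.conj_I, mul_neg]
    rw [h1, hf_def, ← Complex.exp_add]
    simp
  · -- φ U = u
    have h1 : φ (cfc f b') = cfc f (φ b') :=
      StarAlgHom.map_cfc φ f b' hf_cont.continuousOn hφc hb'_n
        (by rw [hφb']; exact ha_sa.isStarNormal)
    rw [hU_def, h1, hφb', ha_def,
      ← cfc_comp f (fun z : ℂ => (Complex.arg z : ℂ)) u hnu hf_cont.continuousOn hcont_arg]
    conv_rhs => rw [← cfc_id ℂ u hnu]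
    exact cfc_congr fun z hz => by
      simp only [hf_def, Function.comp, id]
      exact hexp_eq z hz
  · -- norm bound
    have h1 : U - 1 = cfc (fun z : ℂ => f z - 1) b' := by
      rw [hU_def, cfc_sub _ _ b' hf_cont.continuousOn continuousOn_const, cfc_const_one ℂ b']
    rw [h1]
    refine lt_of_le_of_lt (norm_cfc_le hr0 fun x hx => ?_) hrε
    have hxre : x = (x.re : ℂ) := hb'_sa.mem_spectrum_eq_re hx
    have hxm : |x.re| ≤ m := by
      have h2 : ‖x‖ ≤ m := (spectrum.norm_le_norm_of_mem hx).trans hb'_norm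
      calc |x.re| ≤ ‖x‖ := Complex.abs_re_le_norm x
        _ ≤ m := h2
    calc ‖f x - 1‖ = ‖Complex.exp ((x.re : ℝ) * Complex.I) - 1‖ := by rw [hf_def]; nth_rw 1 [hxre]
      _ = 2 * |Real.sin (x.re / 2)| := stmt5_norm_exp_I_sub_one x.re
      _ ≤ 2 * Real.sin (m / 2) := stmt5_sin_mono hxm hmpi
      _ = r := by rw [hsinm]; ring
end

section
/- Let C be a unital C*-algebra and J ⊆ C a closed two-sided ideal. Let p ∈ C/J be a projection which is connected to a projection q ∈ C/J by a norm-continuous path of projections in C/J, and suppose q lifts to a projection in C. Then p lifts to a projection in C. -/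
open scoped CStarAlgebra

/-- The real spectrum of an idempotent is contained in `{0, 1}`. -/
lemma idem_spectrum_subset {A : Type*} [CStarAlgebra A] {e : A} (he : IsIdempotentElem e) :
    spectrum ℝ e ⊆ {0, 1} := by
  intro x hx
  by_contra hx01
  have h0 : x ≠ 0 := fun h => hx01 (by simp [h])
  have h1 : x ≠ 1 := fun h => hx01 (by simp [h])
  have hsub : x - 1 ≠ 0 := sub_ne_zero.mpr h1
  rw [spectrum.mem_iff] at hx
  apply hx
  refine ⟨⟨algebraMap ℝ A x - e, x⁻¹ • (1 : A) + (x⁻¹ * (x - 1)⁻¹) • e, ?_, ?_⟩, rfl⟩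
  · rw [Algebra.algebraMap_eq_smul_one]
    simp only [sub_mul, mul_add, smul_mul_assoc, mul_smul_comm, one_mul, mul_one, he.eq]
    rw [show (1 : A) = (1 : ℝ) • (1 : A) by simp]
    match_scalars <;> (field_simp; try ring)
  · rw [Algebra.algebraMap_eq_smul_one]
    simp only [add_mul, mul_sub, smul_mul_assoc, mul_smul_comm, one_mul, mul_one, he.eq]
    rw [show (1 : A) = (1 : ℝ) • (1 : A) by simp]
    match_scalars <;> (field_simp; try ring)

/-- Norm-controlled self-adjoint lift through a surjective star hom. -/
lemma exists_sa_lift {C D : Type*} [CStarAlgebra C] [CStarAlgebra D]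
    (φ : C →⋆ₐ[ℂ] D) (hφ : Function.Surjective φ) {d : D} (hd : IsSelfAdjoint d) :
    ∃ A : C, IsSelfAdjoint A ∧ φ A = d ∧ ‖A‖ ≤ ‖d‖ := by
  rcases subsingleton_or_nontrivial D with hD | hD
  · exact ⟨0, IsSelfAdjoint.zero C, Subsingleton.elim _ _, by simp⟩
  obtain ⟨x, hx⟩ := hφ d
  set A₀ : C := (2⁻¹ : ℂ) • (x + star x) with hA₀
  have hA₀sa : IsSelfAdjoint A₀ := by
    rw [hA₀, IsSelfAdjoint, star_smul, star_add, star_star]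
    simp [add_comm]
  have hφA₀ : φ A₀ = d := by
    rw [hA₀, map_smul, map_add, map_star, hx, hd.star_eq, ← two_smul ℂ d, smul_smul]
    norm_num
  set g : ℝ → ℝ := fun t => max (-‖d‖) (min ‖d‖ t) with hg
  have hgc : Continuous g := by fun_prop
  refine ⟨cfc g A₀, cfc_predicate g A₀, ?_, ?_⟩
  · rw [StarAlgHom.map_cfc φ g A₀ hgc.continuousOn (map_continuous φ) hA₀sa
      (hφA₀ ▸ hd), hφA₀]
    conv_rhs => rw [← cfc_id ℝ d hd]
    apply cfc_congr
    intro t ht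
    have h2 : |t| ≤ ‖d‖ := by
      simpa using spectrum.norm_le_norm_of_mem ht
    obtain ⟨hl, hr⟩ := abs_le.mp h2
    simp only [hg, id]
    rw [min_eq_right hr, max_eq_right hl]
  · exact norm_cfc_le (norm_nonneg d) fun t _ => by
      rw [Real.norm_eq_abs, abs_le]
      exact ⟨le_max_left _ _, max_le (by simp) (min_le_left _ _)⟩

/-- One-step lemma: a projection close to a liftable projection is liftable. -/
lemma step_lift {C D : Type*} [CStarAlgebra C] [CStarAlgebra D]
    (φ : C →⋆ₐ[ℂ] D) (hφ : Function.Surjective φ) {p q : D}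
    (hp : IsSelfAdjoint p ∧ IsIdempotentElem p)
    (hq : IsSelfAdjoint q ∧ IsIdempotentElem q)
    (hpq : ‖p - q‖ < 4⁻¹)
    (hqlift : ∃ Q : C, IsSelfAdjoint Q ∧ IsIdempotentElem Q ∧ φ Q = q) :
    ∃ P : C, IsSelfAdjoint P ∧ IsIdempotentElem P ∧ φ P = p := by
  obtain ⟨Q, hQsa, hQidem, hQ⟩ := hqlift
  obtain ⟨A, hAsa, hAφ, hAnorm⟩ := exists_sa_lift φ hφ (hp.1.sub hq.1)
  have hAlt : ‖A‖ < 4⁻¹ := lt_of_le_of_lt hAnorm hpq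
  set a : C := Q + A with ha_def
  have hasa : IsSelfAdjoint a := hQsa.add hAsa
  have hφa : φ a = p := by rw [ha_def, map_add, hQ, hAφ]; abel
  have hQspec : spectrum ℝ Q ⊆ {0, 1} := idem_spectrum_subset hQidem
  -- spectral gap for `a`
  have hgap : ∀ x ∈ spectrum ℝ a, x < 4⁻¹ ∨ 3 / 4 < x := by
    intro x hx
    by_contra hcon
    push_neg at hcon
    obtain ⟨hx1, hx2⟩ := hcon
    rw [spectrum.mem_iff] at hx
    apply hx
    have hne : ∀ t ∈ spectrum ℝ Q, x - t ≠ 0 := by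
      intro t ht
      rcases hQspec ht with h | h <;> rw [h] <;> intro hc <;>
        [ (rw [sub_zero] at hc; rw [hc] at hx1; norm_num at hx1);
          (have : x = 1 := by linarith [sub_eq_zero.mp hc]; ;
           rw [this] at hx2; norm_num at hx2) ]
    have hcont : ContinuousOn (fun t : ℝ => (x - t)⁻¹) (spectrum ℝ Q) :=
      ContinuousOn.inv₀ (by fun_prop) hne
    set r : C := cfc (fun t : ℝ => (x - t)⁻¹) Q with hr
    have hX : algebraMap ℝ C x - Q = cfc (fun t : ℝ => x - t) Q := by
      rw [cfc_sub (fun _ : ℝ => x) (fun t : ℝ => t) Q (by fun_prop) (by fun_prop),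
        cfc_const x Q hQsa, cfc_id' ℝ Q hQsa]
    have hmul1 : (algebraMap ℝ C x - Q) * r = 1 := by
      rw [hX, hr, ← cfc_mul _ _ Q (by fun_prop) hcont]
      rw [show (1 : C) = cfc (fun _ : ℝ => (1 : ℝ)) Q from (cfc_const_one ℝ Q hQsa).symm]
      exact cfc_congr fun t ht => mul_inv_cancel₀ (hne t ht)
    have hmul2 : r * (algebraMap ℝ C x - Q) = 1 := by
      rw [hX, hr, ← cfc_mul _ _ Q hcont (by fun_prop)]
      rw [show (1 : C) = cfc (fun _ : ℝ => (1 : ℝ)) Q from (cfc_const_one ℝ Q hQsa).symm]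
      exact cfc_congr fun t ht => inv_mul_cancel₀ (hne t ht)
    have hrnorm : ‖r‖ ≤ 4 := by
      apply norm_cfc_le (by norm_num)
      intro t ht
      rw [Real.norm_eq_abs, abs_inv]
      have habs : 4⁻¹ ≤ |x - t| := by
        rcases hQspec ht with h | h <;> subst h
        · rw [sub_zero, abs_of_nonneg (by linarith)]; linarith
        · rw [abs_sub_comm, abs_of_nonneg (by linarith)]; linarith
      calc |x - t|⁻¹ ≤ (4⁻¹ : ℝ)⁻¹ := by
            apply inv_anti₀ (by norm_num) habs
        _ = 4 := by norm_num
    have hu2 : IsUnit (1 - r * A) := by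
      apply isUnit_one_sub_of_norm_lt_one
      calc ‖r * A‖ ≤ ‖r‖ * ‖A‖ := norm_mul_le _ _
        _ ≤ 4 * ‖A‖ := by nlinarith [norm_nonneg A]
        _ < 4 * 4⁻¹ := by nlinarith [norm_nonneg A]
        _ = 1 := by norm_num
    have hu1 : IsUnit (algebraMap ℝ C x - Q) := ⟨⟨_, r, hmul1, hmul2⟩, rfl⟩
    have hfac : algebraMap ℝ C x - a = (algebraMap ℝ C x - Q) * (1 - r * A) := by
      rw [mul_sub, mul_one, ← mul_assoc, hmul1, one_mul, ha_def, sub_add_eq_sub_sub]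
    rw [hfac]
    exact hu1.mul hu2
  -- build the projection via functional calculus
  set g : ℝ → ℝ := fun t => min 1 (max 0 (2 * t - 2⁻¹)) with hgdef
  have hgc : Continuous g := by fun_prop
  have hg01 : ∀ x ∈ spectrum ℝ a, g x = 0 ∨ g x = 1 := by
    intro x hx
    rcases hgap x hx with h | h
    · left
      have : 2 * x - 2⁻¹ ≤ 0 := by linarith
      simp [hgdef, max_eq_left this]
    · right
      have h1 : (1 : ℝ) ≤ 2 * x - 2⁻¹ := by linarith
      have h0 : (0 : ℝ) ≤ 2 * x - 2⁻¹ := by linarith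
      simp [hgdef, max_eq_right h0, min_eq_left h1]
  refine ⟨cfc g a, cfc_predicate g a, ?_, ?_⟩
  · show cfc g a * cfc g a = cfc g a
    rw [← cfc_mul g g a hgc.continuousOn hgc.continuousOn]
    exact cfc_congr fun x hx => by rcases hg01 x hx with h | h <;> rw [h] <;> norm_num
  · rw [StarAlgHom.map_cfc φ g a hgc.continuousOn (map_continuous φ) hasa (hφa ▸ hp.1), hφa]
    conv_rhs => rw [← cfc_id ℝ p hp.1]
    apply cfc_congr
    intro x hx
    rcases idem_spectrum_subset hp.2 hx with h | h <;> rw [h] <;> simp [hgdef] <;> norm_num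


/-- Let `C` be a unital C*-algebra and `J` a closed two-sided ideal.
If a projection `p ∈ C/J` is connected to a projection `q ∈ C/J` by a norm-continuous path
of projections and `q` lifts to a projection in `C`, then `p` lifts to a projection in `C`.

The quotient is encoded by a surjective unital `*`-homomorphism `φ : C → D` between unital
C*-algebras (`D ≅ C/ker φ`); a projection is a self-adjoint idempotent. -/
theorem stmt6 {C D : Type*} [CStarAlgebra C] [CStarAlgebra D]
    (φ : C →⋆ₐ[ℂ] D) (hφ : Function.Surjective φ)
    (p q : D)
    (hp : IsSelfAdjoint p ∧ IsIdempotentElem p)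
    (hq : IsSelfAdjoint q ∧ IsIdempotentElem q)
    (f : ℝ → D) (hf : ContinuousOn f (Set.Icc 0 1))
    (hfproj : ∀ t ∈ Set.Icc (0 : ℝ) 1, IsSelfAdjoint (f t) ∧ IsIdempotentElem (f t))
    (hf0 : f 0 = q) (hf1 : f 1 = p)
    (hqlift : ∃ Q : C, IsSelfAdjoint Q ∧ IsIdempotentElem Q ∧ φ Q = q) :
    ∃ P : C, IsSelfAdjoint P ∧ IsIdempotentElem P ∧ φ P = p := by
  --
  -- uniform continuity of `f` on the compact interval
  set F : Set.Icc (0 : ℝ) 1 → D := fun t => f t with hF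
  have hFc : Continuous F := hf.restrict
  have hFu : UniformContinuous F := CompactSpace.uniformContinuous_of_continuous hFc
  rw [Metric.uniformContinuous_iff] at hFu
  obtain ⟨δ, hδpos, hδ⟩ := hFu 4⁻¹ (by norm_num)
  obtain ⟨n, hn⟩ := exists_nat_one_div_lt hδpos
  have hnpos : (0 : ℝ) < (n : ℝ) + 1 := by positivity
  have mem : ∀ i : ℕ, i ≤ n + 1 → ((i : ℝ) / ((n : ℝ) + 1)) ∈ Set.Icc (0 : ℝ) 1 := by
    intro i hi
    constructor
    · positivity
    · rw [div_le_one hnpos]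
      exact_mod_cast by exact_mod_cast Nat.cast_le.mpr hi |>.trans (by push_cast; linarith)
  have key : ∀ i : ℕ, i ≤ n + 1 →
      ∃ P : C, IsSelfAdjoint P ∧ IsIdempotentElem P ∧ φ P = f ((i : ℝ) / ((n : ℝ) + 1)) := by
    intro i
    induction i with
    | zero =>
      intro _
      simpa [hf0] using hqlift
    | succ i ih =>
      intro hi
      have hi' : i ≤ n + 1 := Nat.le_of_succ_le hi
      refine step_lift φ hφ (hfproj _ (mem (i + 1) hi)) (hfproj _ (mem i hi')) ?_ (ih hi')
      have hdist : dist (⟨((i + 1 : ℕ) : ℝ) / ((n : ℝ) + 1), mem (i + 1) hi⟩ : Set.Icc (0:ℝ) 1)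
          (⟨(i : ℝ) / ((n : ℝ) + 1), mem i hi'⟩ : Set.Icc (0:ℝ) 1) < δ := by
        rw [Subtype.dist_eq]
        simp only [Real.dist_eq]
        have : ((i + 1 : ℕ) : ℝ) / ((n : ℝ) + 1) - (i : ℝ) / ((n : ℝ) + 1)
            = 1 / ((n : ℝ) + 1) := by
          push_cast
          field_simp
          ring
        rw [this, abs_of_pos (by positivity)]
        exact hn
      have := hδ hdist
      simpa [hF, dist_eq_norm] using this
  have hlast := key (n + 1) le_rfl
  have hone : (((n + 1 : ℕ) : ℝ)) / ((n : ℝ) + 1) = 1 := by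
    push_cast
    field_simp
  rw [hone, hf1] at hlast
  exact hlast
end

section
/- Let B be a separable stable C*-algebra and (A_t)_{t∈I} a norm-continuous path, over a compact interval I containing 0, of self-adjoint Fredholm operators in M(B) such that A_0 is invertible in M(B). Then for every t ∈ I there exists a self-adjoint b ∈ B such that A_t + b is invertible in M(B) (i.e., every A_t has a trivializing operator). -/
open scoped MultiplierAlgebra

/-- `x ∈ 𝓜(ℂ, B)` belongs to (the canonical image of) the ideal `B` of its
multiplier algebra. -/
def inCanonicalIdeal {B : Type*} [NonUnitalCStarAlgebra B] (x : 𝓜(ℂ, B)) : Prop :=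
  ∃ b : B, (b : 𝓜(ℂ, B)) = x

/-- Murray–von Neumann equivalence of projections. -/
def MvNEquiv {C : Type*} [Mul C] [Star C] (p q : C) : Prop :=
  ∃ v : C, star v * v = p ∧ v * star v = q

/-- `B` is a stable C*-algebra, encoded via the standard characterization (for σ-unital,
in particular separable, `B`): the multiplier algebra `𝓜(ℂ, B)` contains a sequence of
isometries with pairwise orthogonal ranges whose range projections sum to `1` strictly. -/
def IsStable (B : Type*) [NonUnitalCStarAlgebra B] : Prop :=
  ∃ s : ℕ → 𝓜(ℂ, B),
    (∀ n, star (s n) * s n = 1) ∧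
    (∀ m n, m ≠ n → star (s m) * s n = 0) ∧
    ∀ b : B, Filter.Tendsto
      (fun N : ℕ => (∑ n ∈ Finset.range N, s n * star (s n)) * (b : 𝓜(ℂ, B)))
      Filter.atTop (nhds (b : 𝓜(ℂ, B)))

section Aux

variable {C : Type*} [CStarAlgebra C]

/-- An invertible element has a spectral gap around `0`. -/
lemma aux_gap_exists {a : C} (hu : IsUnit a) :
    ∃ ε > (0:ℝ), ∀ μ ∈ spectrum ℝ a, ε ≤ |μ| := by
  have h0 : (0:ℝ) ∉ spectrum ℝ a := spectrum.zero_notMem ℝ hu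
  have hcl : IsClosed (spectrum ℝ a) := spectrum.isClosed a
  obtain ⟨ε, hε, hball⟩ := Metric.isOpen_iff.mp hcl.isOpen_compl 0 h0
  refine ⟨ε, hε, fun μ hμ => ?_⟩
  by_contra h
  push_neg at h
  exact hball (by simpa [Real.dist_eq] using h) hμ

/-- For a self-adjoint element with a spectral gap, `a - λ` is invertible with a
norm-controlled inverse, produced via the continuous functional calculus. -/
lemma aux_shifted_unit {a : C} (ha : IsSelfAdjoint a) {ε : ℝ}
    (hgap : ∀ μ ∈ spectrum ℝ a, ε ≤ |μ|) {l : ℝ} (hl : |l| < ε) :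
    ∃ v : C, (a - algebraMap ℝ C l) * v = 1 ∧ v * (a - algebraMap ℝ C l) = 1 ∧
      ‖v‖ ≤ (ε - |l|)⁻¹ := by
  have hεl : 0 < ε - |l| := by linarith
  have hne : ∀ x ∈ spectrum ℝ a, x - l ≠ 0 := by
    intro x hx
    have h1 : ε ≤ |x| := hgap x hx
    have : ε - |l| ≤ |x - l| := by
      have := abs_sub_abs_le_abs_sub x l
      linarith
    intro h
    rw [h] at this
    simp at this
    linarith
  have hcont : ContinuousOn (fun x : ℝ => (x - l)⁻¹) (spectrum ℝ a) :=
    ((continuousOn_id.sub continuousOn_const).inv₀ hne)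
  refine ⟨cfc (fun x : ℝ => (x - l)⁻¹) a, ?_, ?_, ?_⟩
  · have h1 : a - algebraMap ℝ C l = cfc (fun x : ℝ => x - l) a := by
      rw [cfc_sub (fun x : ℝ => x) (fun _ : ℝ => l) a, cfc_id' ℝ a, cfc_const l a]
    rw [h1, ← cfc_mul _ _ a]
    rw [show (fun x : ℝ => (x - l) * (x - l)⁻¹) = fun x : ℝ => if x - l = 0 then 0 else 1 by
      ext x; by_cases h : x - l = 0 <;> simp [h, mul_inv_cancel₀]]
    calc cfc (fun x : ℝ => if x - l = 0 then (0:ℝ) else 1) a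
        = cfc (fun _ : ℝ => (1:ℝ)) a := cfc_congr (fun x hx => by simp [hne x hx])
      _ = 1 := cfc_const_one ℝ a
  · have h1 : a - algebraMap ℝ C l = cfc (fun x : ℝ => x - l) a := by
      rw [cfc_sub (fun x : ℝ => x) (fun _ : ℝ => l) a, cfc_id' ℝ a, cfc_const l a]
    rw [h1, ← cfc_mul (fun x : ℝ => (x - l)⁻¹) (fun x : ℝ => x - l) a hcont (by fun_prop)]
    rw [show (fun x : ℝ => (x - l)⁻¹ * (x - l)) = fun x : ℝ => if x - l = 0 then 0 else 1 by
      ext x; by_cases h : x - l = 0 <;> simp [h, inv_mul_cancel₀]]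
    calc cfc (fun x : ℝ => if x - l = 0 then (0:ℝ) else 1) a
        = cfc (fun _ : ℝ => (1:ℝ)) a := cfc_congr (fun x hx => by simp [hne x hx])
      _ = 1 := cfc_const_one ℝ a
  · refine norm_cfc_le (by positivity) fun x hx => ?_
    have h1 : ε ≤ |x| := hgap x hx
    have h2 : ε - |l| ≤ |x - l| := by
      have := abs_sub_abs_le_abs_sub x l
      linarith
    rw [Real.norm_eq_abs, abs_inv]
    exact inv_anti₀ hεl h2

/-- A spectral gap is stable under small self-adjoint perturbations. -/
lemma aux_gap_perturb {a a' : C} (ha : IsSelfAdjoint a) {ε : ℝ} (hε : 0 < ε)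
    (hgap : ∀ μ ∈ spectrum ℝ a, ε ≤ |μ|) (hclose : ‖a' - a‖ < ε/2) :
    ∀ μ ∈ spectrum ℝ a', ε/2 ≤ |μ| := by
  intro μ hμ
  by_contra h
  push_neg at h
  have hμε : |μ| < ε := by linarith
  obtain ⟨v, hv1, hv2, hv3⟩ := aux_shifted_unit ha hgap hμε
  have hnorm : ‖v * (a' - a)‖ < 1 := by
    calc ‖v * (a' - a)‖ ≤ ‖v‖ * ‖a' - a‖ := norm_mul_le _ _
      _ ≤ (ε - |μ|)⁻¹ * ‖a' - a‖ := by
          apply mul_le_mul_of_nonneg_right hv3 (norm_nonneg _)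
      _ < (ε/2)⁻¹ * (ε/2) := by
          apply mul_lt_mul' ?_ hclose (norm_nonneg _) (by positivity)
          apply inv_anti₀ (by positivity)
          linarith
      _ = 1 := by field_simp
  have hu1 : IsUnit (a - algebraMap ℝ C μ) := ⟨⟨_, v, hv1, hv2⟩, rfl⟩
  have hu2 : IsUnit (1 + v * (a' - a)) := by
    have := (Units.oneSub (-(v * (a' - a))) (by rwa [norm_neg])).isUnit
    rwa [Units.val_oneSub, sub_neg_eq_add] at this
  have heq : (a - algebraMap ℝ C μ) * (1 + v * (a' - a)) = a' - algebraMap ℝ C μ := by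
    rw [mul_add, mul_one, ← mul_assoc, hv1, one_mul]
    abel
  have : IsUnit (a' - algebraMap ℝ C μ) := heq ▸ hu1.mul hu2
  have h2 : μ ∉ spectrum ℝ a' := spectrum.notMem_iff.mpr (by simpa [neg_sub] using this.neg)
  exact h2 hμ

end Aux

section Lift

variable {B Q : Type*} [NonUnitalCStarAlgebra B] [CStarAlgebra Q]
variable (π : 𝓜(ℂ, B) →⋆ₐ[ℂ] Q)

lemma aux_pi_norm_le (x : 𝓜(ℂ, B)) : ‖π x‖ ≤ ‖x‖ :=
  NonUnitalStarAlgHom.norm_apply_le π x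

lemma aux_pi_continuous : Continuous π :=
  AddMonoidHomClass.continuous_of_bound π 1
    (fun a => by simpa using aux_pi_norm_le π a)

/-- Norm-controlled self-adjoint lifting along a surjective `*`-homomorphism. -/
lemma aux_norm_lift (hπ : Function.Surjective π) {x : Q} (hx : IsSelfAdjoint x)
    {ρ : ℝ} (hρ : 0 ≤ ρ) (hxρ : ‖x‖ ≤ ρ) :
    ∃ d : 𝓜(ℂ, B), IsSelfAdjoint d ∧ π d = x ∧ ‖d‖ ≤ ρ := by
  obtain ⟨m, hm⟩ := hπ x
  set d0 : 𝓜(ℂ, B) := (2:ℂ)⁻¹ • (m + star m) with hd0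
  have hd0sa : IsSelfAdjoint d0 := by
    simp only [hd0, IsSelfAdjoint, star_smul, star_add, star_star]
    rw [show star ((2:ℂ)⁻¹) = (2:ℂ)⁻¹ by simp]
    rw [add_comm]
  have hπd0 : π d0 = x := by
    have : π (star m) = x := by rw [map_star, hm, hx.star_eq]
    rw [hd0, map_smul, map_add, hm, this, ← two_smul ℂ x, smul_smul]
    norm_num
  set f : ℝ → ℝ := fun t => max (-ρ) (min ρ t) with hf
  refine ⟨cfc f d0, cfc_predicate f d0, ?_, ?_⟩
  · rcases subsingleton_or_nontrivial Q with hQ | hQ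
    · exact Subsingleton.elim _ _
    rw [StarAlgHom.map_cfc π f d0 (by fun_prop) (aux_pi_continuous π) hd0sa (hπd0 ▸ hx), hπd0]
    have : (spectrum ℝ x).EqOn f id := by
      intro t ht
      have h1 : ‖t‖ ≤ ‖x‖ := spectrum.norm_le_norm_of_mem ht
      rw [Real.norm_eq_abs] at h1
      have h2 : |t| ≤ ρ := h1.trans hxρ
      rw [abs_le] at h2
      simp [hf, h2.1, h2.2, min_eq_right, max_eq_right, id]
    rw [cfc_congr this, cfc_id ℝ x]
  · refine norm_cfc_le hρ fun t ht => ?_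
    rw [Real.norm_eq_abs, abs_le]
    constructor
    · simp [hf]
    · simp only [hf, max_le_iff]
      exact ⟨by linarith, (min_le_left _ _)⟩

/-- A self-adjoint invertible lift can be normalized (via the continuous functional
calculus) so that its inverse has norm controlled by the spectral gap downstairs. -/
lemma aux_normalized_lift {X : 𝓜(ℂ, B)} (hXsa : IsSelfAdjoint X) (hXu : IsUnit X)
    {ε : ℝ} (hε : 0 < ε) (hgap : ∀ μ ∈ spectrum ℝ (π X), ε ≤ |μ|) :
    ∃ Y V : 𝓜(ℂ, B), IsSelfAdjoint Y ∧ π Y = π X ∧ Y * V = 1 ∧ V * Y = 1 ∧ ‖V‖ ≤ ε⁻¹ := by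
  set g : ℝ → ℝ := fun t => if 0 < t then max t ε else min t (-ε) with hg
  have hgabs : ∀ t : ℝ, ε ≤ |g t| := by
    intro t
    by_cases h : 0 < t
    · simp only [hg, if_pos h]
      rw [abs_of_pos (lt_of_lt_of_le hε (le_max_right _ _))]
      exact le_max_right _ _
    · simp only [hg, if_neg h]
      rw [abs_of_neg (lt_of_le_of_lt (min_le_right _ _) (by linarith))]
      have : min t (-ε) ≤ -ε := min_le_right _ _
      linarith
  have hgne : ∀ t : ℝ, g t ≠ 0 := fun t h => by
    have := hgabs t; rw [h] at this; simp at this; linarith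
  have hzero : (0:ℝ) ∉ spectrum ℝ X := spectrum.zero_notMem ℝ hXu
  have hgcont : ContinuousOn g (spectrum ℝ X) := by
    intro t ht
    have htne : t ≠ 0 := fun h => hzero (h ▸ ht)
    apply ContinuousAt.continuousWithinAt
    rcases htne.lt_or_gt with hneg | hpos
    · have hev : g =ᶠ[nhds t] (fun x => min x (-ε)) := by
        filter_upwards [Iio_mem_nhds hneg] with x hx
        rw [Set.mem_Iio] at hx
        simp [hg, not_lt.mpr (le_of_lt hx)]
      exact ContinuousAt.congr (by fun_prop) hev.symm
    · have hev : g =ᶠ[nhds t] (fun x => max x ε) := by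
        filter_upwards [Ioi_mem_nhds hpos] with x hx
        rw [Set.mem_Ioi] at hx
        simp [hg, hx]
      exact ContinuousAt.congr (by fun_prop) hev.symm
  have hginv : ContinuousOn (fun t : ℝ => (g t)⁻¹) (spectrum ℝ X) :=
    hgcont.inv₀ fun t _ => hgne t
  refine ⟨cfc g X, cfc (fun t => (g t)⁻¹) X, cfc_predicate g X, ?_, ?_, ?_, ?_⟩
  · rcases subsingleton_or_nontrivial Q with hQ | hQ
    · exact Subsingleton.elim _ _
    have hπXsa : IsSelfAdjoint (π X) := by rw [IsSelfAdjoint, ← map_star, hXsa.star_eq]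
    rw [StarAlgHom.map_cfc π g X hgcont (aux_pi_continuous π) hXsa hπXsa]
    have heq : (spectrum ℝ (π X)).EqOn g id := by
      intro t ht
      have h1 : ε ≤ |t| := hgap t ht
      have htne : t ≠ 0 := fun h => by rw [h] at h1; simp at h1; linarith
      rcases htne.lt_or_gt with hneg | hpos
      · have : t ≤ -ε := by
          rw [abs_of_neg hneg] at h1; linarith
        simp [hg, not_lt.mpr (le_of_lt hneg), min_eq_left this, id]
      · have : ε ≤ t := by rwa [abs_of_pos hpos] at h1
        simp [hg, hpos, max_eq_left this, id]
    rw [cfc_congr heq, cfc_id ℝ (π X)]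
  · rw [← cfc_mul _ _ X hgcont hginv]
    calc cfc (fun t => g t * (g t)⁻¹) X = cfc (fun _ : ℝ => (1:ℝ)) X :=
          cfc_congr (fun t _ => mul_inv_cancel₀ (hgne t))
      _ = 1 := cfc_const_one ℝ X
  · rw [← cfc_mul _ _ X hginv hgcont]
    calc cfc (fun t => (g t)⁻¹ * g t) X = cfc (fun _ : ℝ => (1:ℝ)) X :=
          cfc_congr (fun t _ => inv_mul_cancel₀ (hgne t))
      _ = 1 := cfc_const_one ℝ X
  · refine norm_cfc_le (by positivity) fun t _ => ?_
    rw [Real.norm_eq_abs, abs_inv]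
    exact inv_anti₀ hε (hgabs t)

/-- The transfer step: if `π X` has a self-adjoint invertible lift and a spectral gap `ε`,
then any self-adjoint `x'` within `ε/4` of `π X` also has a self-adjoint invertible lift. -/
lemma aux_step (hπ : Function.Surjective π) {X : 𝓜(ℂ, B)} {x' : Q} {ε : ℝ} (hε : 0 < ε)
    (hXsa : IsSelfAdjoint X) (hXu : IsUnit X)
    (hgap : ∀ μ ∈ spectrum ℝ (π X), ε ≤ |μ|)
    (hx'sa : IsSelfAdjoint x') (hclose : ‖x' - π X‖ ≤ ε/4) :
    ∃ Y : 𝓜(ℂ, B), IsSelfAdjoint Y ∧ IsUnit Y ∧ π Y = x' := by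
  obtain ⟨Y0, V, hY0sa, hY0π, hYV, hVY, hVnorm⟩ := aux_normalized_lift π hXsa hXu hε hgap
  have hπXsa : IsSelfAdjoint (π X) := by
    rw [IsSelfAdjoint, ← map_star, hXsa.star_eq]
  obtain ⟨d, hdsa, hdπ, hdnorm⟩ :=
    aux_norm_lift π hπ (hx'sa.sub hπXsa) (by positivity) hclose
  refine ⟨Y0 + d, hY0sa.add hdsa, ?_, by rw [map_add, hY0π, hdπ]; abel⟩
  have hVd : ‖V * d‖ < 1 := by
    calc ‖V * d‖ ≤ ‖V‖ * ‖d‖ := norm_mul_le _ _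
      _ ≤ ε⁻¹ * (ε/4) := by
          apply mul_le_mul hVnorm hdnorm (norm_nonneg _) (by positivity)
      _ = 1/4 := by field_simp
      _ < 1 := by norm_num
  have hu2 : IsUnit (1 + V * d) := by
    have := (Units.oneSub (-(V * d)) (by rwa [norm_neg])).isUnit
    rwa [Units.val_oneSub, sub_neg_eq_add] at this
  have hu1 : IsUnit Y0 := ⟨⟨Y0, V, hYV, hVY⟩, rfl⟩
  have heq : Y0 * (1 + V * d) = Y0 + d := by
    rw [mul_add, mul_one, ← mul_assoc, hYV, one_mul]
  exact heq ▸ hu1.mul hu2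

end Lift

/-- Let `B` be a separable stable C*-algebra, `π : M(B) → C(B)` the corona
quotient map (encoded as a surjective `*`-homomorphism onto a unital C*-algebra `Q` with
kernel the canonical ideal `B`).  Let `(A t)` be a norm-continuous path, over a compact
interval `[r, s]` containing `0`, of self-adjoint Fredholm operators in `M(B)` with `A 0`
invertible in `M(B)`.  Then every `A t` has a trivializing operator: a self-adjoint `b ∈ B`
with `A t + b` invertible in `M(B)`. -/
theorem stmt10 {B Q : Type*} [NonUnitalCStarAlgebra B] [TopologicalSpace.SeparableSpace B]
    [CStarAlgebra Q] (hstable : IsStable B)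
    (π : 𝓜(ℂ, B) →⋆ₐ[ℂ] Q) (hπ : Function.Surjective π)
    (hker : ∀ m : 𝓜(ℂ, B), π m = 0 ↔ inCanonicalIdeal m)
    (r s : ℝ) (h0 : (0 : ℝ) ∈ Set.Icc r s)
    (A : ℝ → 𝓜(ℂ, B)) (hcont : ContinuousOn A (Set.Icc r s))
    (hsa : ∀ t ∈ Set.Icc r s, IsSelfAdjoint (A t))
    (hFred : ∀ t ∈ Set.Icc r s, IsUnit (π (A t)))
    (hA0 : IsUnit (A 0)) :
    ∀ t ∈ Set.Icc r s, ∃ b : B, IsSelfAdjoint b ∧ IsUnit (A t + (b : 𝓜(ℂ, B))) := by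
  -- The liftability predicate
  set P : ℝ → Prop := fun t => ∃ Y : 𝓜(ℂ, B), IsSelfAdjoint Y ∧ IsUnit Y ∧ π Y = π (A t)
    with hP
  have hπsa : ∀ t ∈ Set.Icc r s, IsSelfAdjoint (π (A t)) := by
    intro t ht
    rw [IsSelfAdjoint, ← map_star, (hsa t ht).star_eq]
  -- locally the predicate is constant
  have key : ∀ t0 ∈ Set.Icc r s, ∃ δ > (0:ℝ), ∀ t ∈ Set.Icc r s,
      ‖A t - A t0‖ < δ → (P t ↔ P t0) := by
    intro t0 ht0
    obtain ⟨ε, hε, hgap⟩ := aux_gap_exists (hFred t0 ht0)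
    refine ⟨ε/8, by positivity, fun t ht hclose => ?_⟩
    have hdiff : ‖π (A t) - π (A t0)‖ < ε/8 := by
      calc ‖π (A t) - π (A t0)‖ = ‖π (A t - A t0)‖ := by rw [map_sub]
        _ ≤ ‖A t - A t0‖ := aux_pi_norm_le π _
        _ < ε/8 := hclose
    have hgap' : ∀ μ ∈ spectrum ℝ (π (A t)), ε/2 ≤ |μ| :=
      aux_gap_perturb (hπsa t0 ht0) hε hgap (by linarith)
    constructor
    · rintro ⟨Y, hYsa, hYu, hYπ⟩
      refine aux_step π hπ (ε := ε/2) (by positivity) hYsa hYu ?_ (hπsa t0 ht0) ?_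
      · rw [hYπ]; exact hgap'
      · rw [hYπ]
        have : ‖π (A t0) - π (A t)‖ < ε / 8 := by rwa [norm_sub_rev]
        linarith
    · rintro ⟨Y, hYsa, hYu, hYπ⟩
      refine aux_step π hπ (ε := ε) hε hYsa hYu ?_ (hπsa t ht) ?_
      · rw [hYπ]; exact hgap
      · rw [hYπ]; linarith
  -- connectedness of the interval
  have hall : ∀ t ∈ Set.Icc r s, P t := by
    haveI : PreconnectedSpace (Set.Icc r s) := Subtype.preconnectedSpace isPreconnected_Icc
    set E : Set (Set.Icc r s) := {x | P ↑x} with hE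
    have hc : Continuous fun x : Set.Icc r s => A ↑x := hcont.restrict
    have hloc : ∀ x0 : Set.Icc r s, ∀ᶠ x : Set.Icc r s in nhds x0, (P ↑x ↔ P ↑x0) := by
      intro x0
      obtain ⟨δ, hδ, hiff⟩ := key ↑x0 x0.2
      have hcont' : Continuous fun x : Set.Icc r s => ‖A ↑x - A ↑x0‖ :=
        (hc.sub continuous_const).norm
      have hopen : IsOpen {x : Set.Icc r s | ‖A ↑x - A ↑x0‖ < δ} :=
        isOpen_lt hcont' continuous_const
      filter_upwards [hopen.mem_nhds (show ‖A ↑x0 - A ↑x0‖ < δ by simpa using hδ)] with x hx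
      exact hiff ↑x x.2 hx
    have hEopen : IsOpen E := by
      rw [isOpen_iff_mem_nhds]
      intro x0 hx0
      filter_upwards [hloc x0] with x hx
      exact hx.mpr hx0
    have hEcopen : IsOpen Eᶜ := by
      rw [isOpen_iff_mem_nhds]
      intro x0 hx0
      filter_upwards [hloc x0] with x hx hPx
      exact hx0 (hx.mp hPx)
    have hEne : E.Nonempty := ⟨⟨0, h0⟩, A 0, hsa 0 h0, hA0, rfl⟩
    have : E = Set.univ := IsClopen.eq_univ ⟨isOpen_compl_iff.mp hEcopen, hEopen⟩ hEne
    intro t ht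
    have : (⟨t, ht⟩ : Set.Icc r s) ∈ E := this ▸ Set.mem_univ _
    exact this
  -- conclude: produce the trivializing operator
  intro t ht
  obtain ⟨Y, hYsa, hYu, hYπ⟩ := hall t ht
  have hY0 : π (Y - A t) = 0 := by rw [map_sub, hYπ, sub_self]
  obtain ⟨b, hb⟩ := (hker _).mp hY0
  set b' : B := (2:ℂ)⁻¹ • (b + star b) with hb'
  have hbsa : IsSelfAdjoint b' := by
    simp only [hb', IsSelfAdjoint, star_smul, star_add, star_star]
    rw [show star ((2:ℂ)⁻¹) = (2:ℂ)⁻¹ by simp, add_comm]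
  have hYA : IsSelfAdjoint (Y - A t) := hYsa.sub (hsa t ht)
  have hcoe : (b' : 𝓜(ℂ, B)) = Y - A t := by
    have h1 : (DoubleCentralizer.coeHom (𝕜 := ℂ) (A := B)) b = (b : 𝓜(ℂ, B)) := rfl
    have h2 : (b' : 𝓜(ℂ, B)) = (DoubleCentralizer.coeHom (𝕜 := ℂ) (A := B)) b' := rfl
    rw [h2, hb', map_smul, map_add, map_star, h1, hb, hYA.star_eq, ← two_smul ℂ (Y - A t),
      smul_smul]
    norm_num
  refine ⟨b', hbsa, ?_⟩
  rw [hcoe, add_sub_cancel]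
  exact hYu
end

section
/- Let C be a unital C*-algebra, J ⊆ C a closed two-sided ideal, (p_t)_{t∈[r,s]} a norm-continuous path of projections in C, and q ∈ C a projection with p_r − q ∈ J. Then there exists a norm-continuous path (q_t)_{t∈[r,s]} of projections in C with q_r = q and p_t − q_t ∈ J for all t ∈ [r,s]. -/
open Set Polynomial

section Paste
variable {α β : Type*} [TopologicalSpace α] [TopologicalSpace β]

lemma continuousOn_union_of_isClosed' {s t : Set α} (hs : IsClosed s) (ht : IsClosed t)
    {f : α → β} (hf : ContinuousOn f s) (hg : ContinuousOn f t) : ContinuousOn f (s ∪ t) := by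
  rintro x (hx | hx)
  · refine (hf x hx).union ?_
    by_cases hxt : x ∈ t
    · exact hg x hxt
    · exact continuousWithinAt_of_notMem_closure (by rwa [ht.closure_eq])
  · refine ContinuousWithinAt.union ?_ (hg x hx)
    by_cases hxs : x ∈ s
    · exact hf x hxs
    · exact continuousWithinAt_of_notMem_closure (by rwa [hs.closure_eq])

end Paste

/-- cut-off function: 0 below 1/4, 1 above 3/4 -/
noncomputable def Fc : ℝ → ℝ := fun x => min 1 (max 0 (2 * x - 1/2))

/-- continuous function with `Fc x = x + (x^2 - x) * Hc x`. -/
noncomputable def Hc : ℝ → ℝ := fun x =>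
  if x ≤ 1/4 then (1 - min x (1/4))⁻¹
  else if x ≤ 3/4 then
    (min (3/4) (max (1/4) x) - 1/2) / ((min (3/4) (max (1/4) x))^2 - min (3/4) (max (1/4) x))
  else -(max x (3/4))⁻¹

lemma Fc_continuous : Continuous Fc := by
  unfold Fc; fun_prop

lemma Hc_continuous : Continuous Hc := by
  unfold Hc
  have h1 : Continuous fun x : ℝ => (1 - min x (1/4))⁻¹ := by
    apply Continuous.inv₀ (by fun_prop)
    intro x
    have : min x (1/4) ≤ 1/4 := min_le_right _ _
    intro h; nlinarith [h]
  have h2 : Continuous fun x : ℝ =>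
      (min (3/4) (max (1/4) x) - 1/2) / ((min (3/4) (max (1/4) x))^2 - min (3/4) (max (1/4) x)) := by
    apply Continuous.div (by fun_prop) (by fun_prop)
    intro x
    have ha : (1/4 : ℝ) ≤ min (3/4) (max (1/4) x) := le_min (by norm_num) (le_max_left _ _)
    have hb : min (3/4 : ℝ) (max (1/4) x) ≤ 3/4 := min_le_left _ _
    intro h; nlinarith
  have h3 : Continuous fun x : ℝ => -(max x (3/4))⁻¹ := by
    apply Continuous.neg
    apply Continuous.inv₀ (by fun_prop)
    intro x
    have : (3/4 : ℝ) ≤ max x (3/4) := le_max_right _ _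
    intro h; nlinarith
  refine Continuous.if_le h1 (Continuous.if_le h2 h3 continuous_id continuous_const ?_)
    continuous_id continuous_const ?_
  · intro x hx; rw [hx]; norm_num
  · intro x hx; rw [hx]; norm_num

lemma Fc_eq (x : ℝ) : Fc x = x + (x^2 - x) * Hc x := by
  unfold Fc Hc
  rcases le_or_gt x (1/4) with h1 | h1
  · rw [if_pos h1]
    have hmax : max 0 (2 * x - 1/2) = 0 := max_eq_left (by linarith)
    have hmin : min x (1/4) = x := min_eq_left h1
    rw [hmax, hmin, min_eq_right (by norm_num : (0:ℝ) ≤ 1)]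
    have hx1 : (1:ℝ) - x ≠ 0 := by intro h; nlinarith
    field_simp
    ring
  · rw [if_neg (not_le.mpr h1)]
    rcases le_or_gt x (3/4) with h2 | h2
    · rw [if_pos h2]
      have hmax : max 0 (2 * x - 1/2) = 2 * x - 1/2 := max_eq_right (by linarith)
      have hmin : min 1 (2 * x - 1/2) = 2 * x - 1/2 := min_eq_right (by linarith)
      have hc1 : max (1/4) x = x := max_eq_right h1.le
      rw [hmax, hmin, hc1, min_eq_right h2]
      have hne : x^2 - x ≠ 0 := by intro h; nlinarith
      have hx0 : x ≠ 0 := by intro h; nlinarith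
      have hx1 : x - 1 ≠ 0 := by intro h; nlinarith
      field_simp
      ring
    · rw [if_neg (not_le.mpr h2)]
      have hmax : max 0 (2 * x - 1/2) = 2 * x - 1/2 := max_eq_right (by linarith)
      have hmin : min 1 (2 * x - 1/2) = 1 := min_eq_left (by linarith)
      have hx : max x (3/4) = x := max_eq_left h2.le
      rw [hmax, hmin, hx]
      have hne : x ≠ 0 := by intro h; nlinarith
      field_simp
      ring

lemma Fc_idem {x : ℝ} (hx : x ≤ 1/4 ∨ 3/4 ≤ x) : Fc x * Fc x = Fc x := by
  unfold Fc
  rcases hx with h | h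
  · rw [max_eq_left (by linarith), min_eq_right (by norm_num : (0:ℝ) ≤ 1)]; ring
  · rw [max_eq_right (by linarith), min_eq_left (by linarith)]; ring

lemma Fc_zero : Fc 0 = 0 := by unfold Fc; norm_num
lemma Fc_one : Fc 1 = 1 := by unfold Fc; norm_num

section Spec

variable {C : Type*} [CStarAlgebra C] [Nontrivial C]

lemma quad_mem_spectrum (a : C) {x : ℝ} (hx : x ∈ spectrum ℝ a) :
    x^2 - x ∈ spectrum ℝ (a * a - a) := by
  have h := spectrum.subset_polynomial_aeval a ((X : ℝ[X])^2 - X) ⟨x, hx, rfl⟩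
  simpa [sq, Polynomial.eval_sub, Polynomial.eval_pow, map_sub, map_pow] using h

lemma spec_abs_le (a : C) {x : ℝ} (hx : x ∈ spectrum ℝ a) : |x| ≤ ‖a‖ := by
  simpa [Real.norm_eq_abs] using spectrum.norm_le_norm_of_mem hx

lemma spec_gap (a : C) (hN : ‖a * a - a‖ < 3/16) {x : ℝ} (hx : x ∈ spectrum ℝ a) :
    x ≤ 1/4 ∨ 3/4 ≤ x := by
  have h := spec_abs_le _ (quad_mem_spectrum a hx)
  by_contra hcon
  push_neg at hcon
  obtain ⟨h1, h2⟩ := hcon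
  rw [abs_le] at h
  nlinarith [h.1, h.2]

lemma spec_proj (e : C) (he : IsIdempotentElem e) {x : ℝ} (hx : x ∈ spectrum ℝ e) :
    x = 0 ∨ x = 1 := by
  have h := quad_mem_spectrum e hx
  rw [he] at h
  simp only [sub_self, spectrum.zero_eq] at h
  have : x^2 - x = 0 := by simpa using h
  have : x * (x - 1) = 0 := by nlinarith
  rcases mul_eq_zero.mp this with h | h
  · exact Or.inl h
  · exact Or.inr (by linarith)

lemma cfc_Fc_proj (e : C) (hsa : IsSelfAdjoint e) (he : IsIdempotentElem e) :
    cfc Fc e = e := by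
  have h1 : cfc Fc e = cfc (id : ℝ → ℝ) e := by
    apply cfc_congr
    intro x hx
    rcases spec_proj e he hx with h | h <;> simp [h, Fc_zero, Fc_one]
  rw [h1, cfc_id ℝ e]

lemma norm_proj_le_one (e : C) (hsa : IsSelfAdjoint e) (he : IsIdempotentElem e) : ‖e‖ ≤ 1 := by
  have h : ‖e‖ * ‖e‖ = ‖e‖ := by
    conv_rhs => rw [← he.eq]
    rw [← CStarRing.norm_star_mul_self, hsa.star_eq]
  nlinarith [norm_nonneg e]

lemma cfc_Fc_idem (a : C) (hsa : IsSelfAdjoint a) (hN : ‖a * a - a‖ < 3/16) :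
    IsIdempotentElem (cfc Fc a) := by
  unfold IsIdempotentElem
  rw [← cfc_mul Fc Fc a (Fc_continuous.continuousOn) (Fc_continuous.continuousOn)]
  apply cfc_congr
  intro x hx
  exact Fc_idem (spec_gap a hN hx)

lemma cfc_Fc_decomp (a : C) (hsa : IsSelfAdjoint a) :
    cfc Fc a = a + (a * a - a) * cfc Hc a := by
  have h1 : cfc Fc a = cfc (fun x : ℝ => x + (x^2 - x) * Hc x) a :=
    cfc_congr fun x _ => Fc_eq x
  have h2 : cfc (fun x : ℝ => x + (x^2 - x) * Hc x) a
      = cfc (fun x : ℝ => x) a + cfc (fun x : ℝ => (x^2 - x) * Hc x) a :=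
    cfc_add a _ _ (by fun_prop)
      (Continuous.continuousOn (((continuous_pow 2).sub continuous_id).mul Hc_continuous))
  have h3 : cfc (fun x : ℝ => (x^2 - x) * Hc x) a
      = cfc (fun x : ℝ => x^2 - x) a * cfc Hc a :=
    cfc_mul _ _ a (by fun_prop) Hc_continuous.continuousOn
  have h4 : cfc (fun x : ℝ => x^2 - x) a
      = cfc (fun x : ℝ => x^2) a - cfc (fun x : ℝ => x) a :=
    cfc_sub _ _ a (by fun_prop) (by fun_prop)
  have h5 : cfc (fun x : ℝ => x^2) a = a^2 := cfc_pow_id a 2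
  rw [h1, h2, h3, h4, h5, cfc_id' ℝ a, sq]

end Spec

section Cont

variable {C : Type*} [CStarAlgebra C] [Nontrivial C]

set_option synthInstance.maxHeartbeats 1000000 in
lemma cfc_comp_continuousOn {S : Set ℝ} (f : ℝ → ℝ) (hf : Continuous f) (a : ℝ → C)
    (ha : ContinuousOn a S) (hsa : ∀ t ∈ S, IsSelfAdjoint (a t))
    (hn : ∀ t ∈ S, ‖a t‖ ≤ 2) : ContinuousOn (fun t => cfc f (a t)) S := by
  apply continuousOn_of_uniform_approx_of_continuousOn
  intro u hu
  obtain ⟨ε, hε, hεu⟩ := Metric.mem_uniformity_dist.mp hu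
  obtain ⟨P, hP⟩ : ∃ P : ℝ[X], ∀ x ∈ Set.Icc (-2:ℝ) 2, |f x - P.eval x| ≤ ε/2 := by
    set f' : C(Set.Icc (-2:ℝ) 2, ℝ) := ContinuousMap.restrict _ ⟨f, hf⟩ with hf'
    have hmem : f' ∈ (polynomialFunctions (Set.Icc (-2:ℝ) 2)).topologicalClosure := by
      rw [polynomialFunctions_closure_eq_top]; trivial
    have hmem2 : f' ∈ closure (polynomialFunctions (Set.Icc (-2:ℝ) 2) : Set _) := by
      rw [← Subalgebra.topologicalClosure_coe, SetLike.mem_coe]; exact hmem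
    obtain ⟨g, hg, hdist⟩ := Metric.mem_closure_iff.mp hmem2 (ε/2) (by positivity)
    rw [SetLike.mem_coe] at hg
    rw [polynomialFunctions] at hg
    obtain ⟨P, -, hPg⟩ := hg
    subst hPg
    refine ⟨P, fun x hx => ?_⟩
    have h1 : dist (f' ⟨x, hx⟩) ((Polynomial.toContinuousMapOnAlgHom (Icc (-2:ℝ) 2) P) ⟨x, hx⟩)
        ≤ dist f' (Polynomial.toContinuousMapOnAlgHom (Icc (-2:ℝ) 2) P) :=
      ContinuousMap.dist_apply_le_dist _
    simp only [hf', ContinuousMap.restrict_apply, ContinuousMap.coe_mk,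
      Polynomial.toContinuousMapOnAlgHom_apply, Polynomial.toContinuousMapOn_apply,
      Polynomial.toContinuousMap_apply] at h1
    rw [Real.dist_eq] at h1
    have hdist' : dist (ContinuousMap.restrict (Set.Icc (-2:ℝ) 2) ⟨f, hf⟩)
        (P.toContinuousMapOn (Set.Icc (-2:ℝ) 2)) < ε/2 := hdist
    linarith [hdist', h1]
  refine ⟨fun t => Polynomial.aeval (a t) P,
    (P.continuous_aeval).comp_continuousOn ha, fun y hy => ?_⟩
  have hsay := hsa y hy
  have key : ‖cfc f (a y) - Polynomial.aeval (a y) P‖ ≤ ε/2 := by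
    rw [← cfc_polynomial P (a y) hsay,
      ← cfc_sub (fun x => f x) (fun x => P.eval x) (a y) hf.continuousOn
        P.continuousOn]
    apply norm_cfc_le (by positivity)
    intro x hx
    have hxb : |x| ≤ 2 := (spec_abs_le (a y) hx).trans (hn y hy)
    rw [Real.norm_eq_abs]
    exact hP x (abs_le.mp hxb |>.1 |> fun h => ⟨h, (abs_le.mp hxb).2⟩)
  apply hεu
  rw [dist_eq_norm]
  linarith

lemma step_norm (q' b : C) (hsa' : IsSelfAdjoint q') (hid' : IsIdempotentElem q')
    (hbn : ‖b‖ ≤ 1/20) : ‖(q' + b) * (q' + b) - (q' + b)‖ < 3/16 := by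
  have hq'n : ‖q'‖ ≤ 1 := norm_proj_le_one q' hsa' hid'
  have hexp : (q' + b) * (q' + b) - (q' + b)
      = (q' * q' - q') + (q' * b + b * q' + b * b - b) := by noncomm_ring
  rw [hid'.eq, sub_self, zero_add] at hexp
  rw [hexp]
  have h1 : ‖q' * b‖ ≤ ‖q'‖ * ‖b‖ := norm_mul_le _ _
  have h2 : ‖b * q'‖ ≤ ‖b‖ * ‖q'‖ := norm_mul_le _ _
  have h3 : ‖b * b‖ ≤ ‖b‖ * ‖b‖ := norm_mul_le _ _
  have h4 : ‖q' * b + b * q' + b * b - b‖ ≤ ‖q' * b‖ + ‖b * q'‖ + ‖b * b‖ + ‖b‖ := by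
    calc ‖q' * b + b * q' + b * b - b‖ ≤ ‖q' * b + b * q' + b * b‖ + ‖b‖ := norm_sub_le _ _
      _ ≤ ‖q' * b + b * q'‖ + ‖b * b‖ + ‖b‖ := by gcongr; exact norm_add_le _ _
      _ ≤ ‖q' * b‖ + ‖b * q'‖ + ‖b * b‖ + ‖b‖ := by gcongr; exact norm_add_le _ _
  have hb0 : 0 ≤ ‖b‖ := norm_nonneg b
  nlinarith

end Cont

/-- Let `C` be a unital C*-algebra, `J` a closed two-sided ideal,
`(p t)` a norm-continuous path of projections in `C` over `[r, s]`, and `q` a projection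
with `p r − q ∈ J`.  Then there is a norm-continuous path `(q t)` of projections in `C`
with `q r = q` and `p t − q t ∈ J` for all `t ∈ [r, s]`. -/
theorem stmt11 {C : Type*} [CStarAlgebra C]
    (J : TwoSidedIdeal C) (hJ : IsClosed (J : Set C))
    (r s : ℝ) (hrs : r ≤ s)
    (p : ℝ → C) (hp : ContinuousOn p (Set.Icc r s))
    (hpproj : ∀ t ∈ Set.Icc r s, IsSelfAdjoint (p t) ∧ IsIdempotentElem (p t))
    (q : C) (hqsa : IsSelfAdjoint q) (hqidem : IsIdempotentElem q)
    (hqr : p r - q ∈ J) :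
    ∃ Qp : ℝ → C, ContinuousOn Qp (Set.Icc r s) ∧
      (∀ t ∈ Set.Icc r s, IsSelfAdjoint (Qp t) ∧ IsIdempotentElem (Qp t)) ∧
      Qp r = q ∧ ∀ t ∈ Set.Icc r s, p t - Qp t ∈ J := by
  rcases subsingleton_or_nontrivial C with hC | hC
  · exact ⟨fun _ => q, continuousOn_const, fun t _ => ⟨hqsa, hqidem⟩, rfl,
      fun t _ => by rw [Subsingleton.elim (p t - q) 0]; exact J.zero_mem⟩
  obtain ⟨δ, hδ, hδp⟩ := Metric.uniformContinuousOn_iff.mp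
    (isCompact_Icc.uniformContinuousOn_of_continuous hp) (1/20) (by norm_num)
  set η := δ/2 with hηdef
  have hη0 : 0 < η := by positivity
  have key : ∀ k : ℕ, ∃ Q : ℝ → C,
      ContinuousOn Q (Set.Icc r (min (r + k * η) s)) ∧
      (∀ t ∈ Set.Icc r (min (r + k * η) s), IsSelfAdjoint (Q t) ∧ IsIdempotentElem (Q t)) ∧
      Q r = q ∧ (∀ t ∈ Set.Icc r (min (r + k * η) s), p t - Q t ∈ J) := by
    intro k
    induction k with
    | zero =>
      simp only [Nat.cast_zero, zero_mul, add_zero, min_eq_left hrs]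
      refine ⟨fun _ => q, continuousOn_const, fun t ht => ?_, rfl, fun t ht => ?_⟩
      · exact ⟨hqsa, hqidem⟩
      · have ht' : t = r := le_antisymm ht.2 ht.1
        rw [ht']; exact hqr
    | succ k ih =>
      by_cases hks : s ≤ r + k * η
      · have h1 : min (r + k * η) s = s := min_eq_right hks
        have h2 : min (r + (k + 1 : ℕ) * η) s = s := by
          apply min_eq_right; push_cast; nlinarith
        rw [h2]; rw [h1] at ih; exact ih
      · push_neg at hks
        set x := min (r + k * η) s with hxdef
        have hx_eq : x = r + k * η := min_eq_left hks.le
        set x' := min (r + (k + 1 : ℕ) * η) s with hx'def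
        have hk0 : (0:ℝ) ≤ (k:ℝ) * η := by positivity
        have hrx : r ≤ x := by rw [hx_eq]; linarith
        have hxx' : x ≤ x' := by
          rw [hx_eq]
          apply le_min _ hks.le
          push_cast; nlinarith
        have hx's : x' ≤ s := min_le_right _ _
        have hx'x : x' - x ≤ η := by
          have h1 : x' ≤ r + (k + 1 : ℕ) * η := min_le_left _ _
          rw [hx_eq]; push_cast at h1 ⊢; linarith
        obtain ⟨Q, hQc, hQproj, hQr, hQmem⟩ := ih
        have hxmem : x ∈ Set.Icc r x := ⟨hrx, le_refl x⟩
        have hq'sa := (hQproj x hxmem).1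
        have hq'id := (hQproj x hxmem).2
        have hq'J : p x - Q x ∈ J := hQmem x hxmem
        have hxIcc : x ∈ Set.Icc r s := ⟨hrx, min_le_right _ _⟩
        set a : ℝ → C := fun t => Q x + (p t - p x) with ha
        have hsubI : Set.Icc x x' ⊆ Set.Icc r s := Set.Icc_subset_Icc hrx hx's
        have hbn : ∀ t ∈ Set.Icc x x', ‖p t - p x‖ ≤ 1/20 := by
          intro t ht
          have h1 : dist t x < δ := by
            rw [Real.dist_eq, abs_of_nonneg (by linarith [ht.1])]
            have h2 := ht.2
            rw [hηdef] at hx'x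
            linarith
          have h2 := hδp t (hsubI ht) x hxIcc h1
          rw [dist_eq_norm] at h2
          linarith
        have hasa : ∀ t ∈ Set.Icc x x', IsSelfAdjoint (a t) := fun t ht =>
          hq'sa.add (((hpproj t (hsubI ht)).1).sub (hpproj x hxIcc).1)
        have hnorm2 : ∀ t ∈ Set.Icc x x', ‖a t‖ ≤ 2 := by
          intro t ht
          calc ‖a t‖ ≤ ‖Q x‖ + ‖p t - p x‖ := norm_add_le _ _
            _ ≤ 1 + 1/20 := add_le_add (norm_proj_le_one _ hq'sa hq'id) (hbn t ht)
            _ ≤ 2 := by norm_num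
        have hgap : ∀ t ∈ Set.Icc x x', ‖a t * a t - a t‖ < 3/16 := fun t ht =>
          step_norm (Q x) _ hq'sa hq'id (hbn t ht)
        have hax : a x = Q x := by simp [ha]
        have hQnx : cfc Fc (a x) = Q x := by
          rw [hax]; exact cfc_Fc_proj _ hq'sa hq'id
        refine ⟨fun t => if t ≤ x then Q t else cfc Fc (a t), ?_, ?_, ?_, ?_⟩
        · have hIcc : Set.Icc r x' = Set.Icc r x ∪ Set.Icc x x' :=
            (Set.Icc_union_Icc_eq_Icc hrx hxx').symm
          rw [hIcc]
          apply continuousOn_union_of_isClosed' isClosed_Icc isClosed_Icc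
          · exact ContinuousOn.congr hQc fun t ht => if_pos ht.2
          · apply ContinuousOn.congr (cfc_comp_continuousOn Fc Fc_continuous a
              (continuousOn_const.add ((hp.mono hsubI).sub continuousOn_const)) hasa hnorm2)
            intro t ht
            by_cases h : t ≤ x
            · have htx : t = x := le_antisymm h ht.1
              simp only [if_pos h, htx, hQnx, if_pos le_rfl]
            · simp only [if_neg h]
        · intro t ht
          by_cases h : t ≤ x
          · simp only [if_pos h]; exact hQproj t ⟨ht.1, h⟩
          · push_neg at h
            have ht' : t ∈ Set.Icc x x' := ⟨h.le, ht.2⟩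
            simp only [if_neg (not_le.mpr h)]
            exact ⟨cfc_predicate Fc (a t), cfc_Fc_idem (a t) (hasa t ht') (hgap t ht')⟩
        · simp only [if_pos hrx]; exact hQr
        · intro t ht
          by_cases h : t ≤ x
          · simp only [if_pos h]; exact hQmem t ⟨ht.1, h⟩
          · push_neg at h
            have ht' : t ∈ Set.Icc x x' := ⟨h.le, ht.2⟩
            have htI : t ∈ Set.Icc r s := hsubI ht'
            simp only [if_neg (not_le.mpr h)]
            have hdec := cfc_Fc_decomp (a t) (hasa t ht')
            have h2 : p t - cfc Fc (a t)
                = (p x - Q x) - (a t * a t - a t) * cfc Hc (a t) := by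
              rw [hdec, ha]; beta_reduce; abel
            rw [h2]
            apply J.sub_mem hq'J
            apply J.mul_mem_right
            have hdJ : a t - p t ∈ J := by
              have hd : a t - p t = -(p x - Q x) := by rw [ha]; beta_reduce; abel
              rw [hd]; exact neg_mem hq'J
            have hpt : p t * p t = p t := (hpproj t htI).2
            have hexp : a t * a t - a t = (p t * p t - p t)
                + (p t * (a t - p t) + (a t - p t) * p t
                  + (a t - p t) * (a t - p t) - (a t - p t)) := by noncomm_ring
            rw [hpt, sub_self, zero_add] at hexp
            rw [hexp]
            exact J.sub_mem (J.add_mem (J.add_mem (J.mul_mem_left _ _ hdJ)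
              (J.mul_mem_right _ _ hdJ)) (J.mul_mem_right _ _ hdJ)) hdJ
  obtain ⟨k, hk⟩ := exists_nat_ge ((s - r) / η)
  have hmin : min (r + k * η) s = s := by
    apply min_eq_right
    rw [div_le_iff₀ hη0] at hk
    linarith
  obtain ⟨Q, h1, h2, h3, h4⟩ := key k
  rw [hmin] at h1 h2 h4
  exact ⟨Q, h1, h2, h3, h4⟩
end

section
/- Let C be a unital C*-algebra. Then GL(C)_{SA,∞} := { x ∈ GL(C) : x = x*, 1_{≥0}(x) ∼ 1 ∼ 1_{≥0}(−x) } is norm-closed in GL(C) and relatively open in the set GL(C)_{SA} of self-adjoint invertibles of C. -/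
open Polynomial

section Aux

variable {C : Type*} [CStarAlgebra C]

lemma commute_aeval {b x : C} (h : Commute b x) (P : ℝ[X]) : Commute b (aeval x P) := by
  induction P using Polynomial.induction_on with
  | C r => rw [aeval_C]; exact ((Algebra.commutes r b).symm : Commute b _)
  | add p q hp hq => simpa [map_add] using hp.add_right hq
  | monomial n r _ =>
      simp only [map_mul, map_pow, aeval_C, aeval_X]
      exact Commute.mul_right ((Algebra.commutes r b).symm) (h.pow_right (n+1))

lemma exists_aeval_close [Nontrivial C] (g : ℝ → ℝ) (hg : Continuous g) (x : C)
    {δ : ℝ} (hδ : 0 < δ) :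
    ∃ P : ℝ[X], ∀ (y : C), IsSelfAdjoint y → ‖y‖ ≤ ‖x‖ + 1 → ‖cfc g y - aeval y P‖ ≤ δ := by
  obtain ⟨P, hP⟩ := exists_polynomial_near_of_continuousOn (-(‖x‖+1)) (‖x‖+1) g
    hg.continuousOn δ hδ
  refine ⟨P, fun y hy hynorm => ?_⟩
  have hspec : ∀ t ∈ spectrum ℝ y, t ∈ Set.Icc (-(‖x‖+1)) (‖x‖+1) := by
    intro t ht
    have h1 : ‖t‖ ≤ ‖y‖ := spectrum.norm_le_norm_of_mem ht
    rw [Real.norm_eq_abs, abs_le] at h1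
    constructor <;> [linarith [h1.1]; linarith [h1.2]]
  rw [← cfc_polynomial P y hy, ← cfc_sub _ _ y]
  refine norm_cfc_le hδ.le fun t ht => ?_
  have := hP t (hspec t ht)
  rw [Real.norm_eq_abs]
  rw [abs_sub_comm] at this
  exact this.le

lemma commute_cfc_s13 [Nontrivial C] {b x : C} (h : Commute b x) (g : ℝ → ℝ) (hg : Continuous g) :
    Commute b (cfc g x) := by
  set c := cfc g x with hc
  have key : ∀ δ : ℝ, 0 < δ → ‖b * c - c * b‖ ≤ 2 * ‖b‖ * δ := by
    intro δ hδ
    obtain ⟨P, hP⟩ := exists_aeval_close g hg x hδ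
    by_cases hx : IsSelfAdjoint x
    · have h1 := hP x hx (by linarith [norm_nonneg x])
      have e : b * aeval x P = aeval x P * b := commute_aeval h P
      have e2 : b * c - c * b = b * (c - aeval x P) + (aeval x P - c) * b := by
        rw [mul_sub, sub_mul, ← e]; abel
      calc ‖b * c - c * b‖ ≤ ‖b * (c - aeval x P)‖ + ‖(aeval x P - c) * b‖ := by
              rw [e2]; exact norm_add_le _ _
        _ ≤ ‖b‖ * ‖c - aeval x P‖ + ‖aeval x P - c‖ * ‖b‖ :=
              add_le_add (norm_mul_le _ _) (norm_mul_le _ _)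
        _ ≤ ‖b‖ * δ + δ * ‖b‖ := by
              rw [norm_sub_rev (aeval x P) c]
              exact add_le_add (by nlinarith [norm_nonneg b]) (by nlinarith [norm_nonneg b])
        _ = 2 * ‖b‖ * δ := by ring
    · rw [hc, cfc_apply_of_not_predicate x hx]
      simp [norm_nonneg, mul_nonneg, hδ.le]
  have hd : ‖b * c - c * b‖ ≤ 0 := by
    by_contra hlt
    push_neg at hlt
    have h2 := key (‖b * c - c * b‖ / (2 * ‖b‖ + 1)) (by positivity)
    rw [← mul_div_assoc, le_div_iff₀ (by positivity)] at h2
    nlinarith [norm_nonneg b]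
  have : b * c - c * b = 0 := by rwa [← norm_le_zero_iff]
  exact sub_eq_zero.mp this

lemma cfc_cont [Nontrivial C] (g : ℝ → ℝ) (hg : Continuous g) (x : C) (hx : IsSelfAdjoint x)
    {δ : ℝ} (hδ : 0 < δ) :
    ∃ η > 0, ∀ y : C, IsSelfAdjoint y → ‖y - x‖ < η → ‖cfc g y - cfc g x‖ < δ := by
  obtain ⟨P, hP⟩ := exists_aeval_close g hg x (show (0:ℝ) < δ/4 by linarith)
  have hcont : ContinuousAt (fun y : C => aeval y P) x := P.continuous_aeval.continuousAt
  obtain ⟨η₁, hη₁pos, hη₁⟩ := Metric.continuousAt_iff.mp hcont (δ/4) (by linarith)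
  refine ⟨min η₁ 1, by positivity, fun y hy hclose => ?_⟩
  have hy1 : ‖y - x‖ < 1 := lt_of_lt_of_le hclose (min_le_right _ _)
  have h1 : ‖y‖ ≤ ‖x‖ + 1 := by
    calc ‖y‖ = ‖(y - x) + x‖ := by rw [sub_add_cancel]
      _ ≤ ‖y - x‖ + ‖x‖ := norm_add_le _ _
      _ ≤ ‖x‖ + 1 := by linarith
  have h2 := hP y hy h1
  have h3 := hP x hx (by linarith [norm_nonneg x])
  have h4 : ‖aeval y P - aeval x P‖ < δ/4 := by
    have := hη₁ (show dist y x < η₁ by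
      rw [dist_eq_norm]; exact lt_of_lt_of_le hclose (min_le_left _ _))
    rwa [dist_eq_norm] at this
  calc ‖cfc g y - cfc g x‖
      = ‖(cfc g y - aeval y P) + (aeval y P - aeval x P) + (aeval x P - cfc g x)‖ := by
        congr 1; abel
    _ ≤ ‖cfc g y - aeval y P‖ + ‖aeval y P - aeval x P‖ + ‖aeval x P - cfc g x‖ :=
        norm_add₃_le
    _ < δ := by rw [norm_sub_rev (aeval x P)]; linarith

lemma mvn_of_close [Nontrivial C] {p q : C} (hp : IsSelfAdjoint p) (hp2 : p * p = p)
    (hq : IsSelfAdjoint q) (hq2 : q * q = q) (hpq : ‖p - q‖ < 1) : MvNEquiv p q := by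
  set u : C := 1 - p - q + 2 * (q * p) with hu_def
  have key : u - 1 = (2 * q - 1) * (p - q) + 2 * (q * q - q) := by rw [hu_def]; noncomm_ring
  have key2 : u - 1 = (2 * q - 1) * (p - q) := by
    rw [key, hq2, sub_self, mul_zero, add_zero]
  have hr_sa : IsSelfAdjoint (2 * q - 1) := by
    have h := hq.star_eq
    rw [IsSelfAdjoint]
    simp only [star_sub, star_mul, star_one, star_ofNat, h]
    rw [mul_two, ← two_mul]
  have hr_sq : (2 * q - 1) * (2 * q - 1) = 1 := by
    have e : (2 * q - 1) * (2 * q - 1) = 4 * (q * q - q) + 1 := by noncomm_ring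
    rw [e, hq2, sub_self, mul_zero, zero_add]
  have hr_norm : ‖2 * q - 1‖ = 1 := by
    have e : ‖star (2 * q - 1) * (2 * q - 1)‖ = ‖2 * q - 1‖ * ‖2 * q - 1‖ :=
      CStarRing.norm_star_mul_self
    rw [hr_sa.star_eq, hr_sq, norm_one] at e
    rcases mul_self_eq_one_iff.mp e.symm with h | h
    · exact h
    · nlinarith [norm_nonneg (2 * q - 1)]
  have hu1 : ‖1 - u‖ < 1 := by
    rw [norm_sub_rev, key2]
    calc ‖(2 * q - 1) * (p - q)‖ ≤ ‖2 * q - 1‖ * ‖p - q‖ := norm_mul_le _ _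
      _ = ‖p - q‖ := by rw [hr_norm, one_mul]
      _ < 1 := hpq
  have hu_unit : IsUnit u := by
    have := (Units.oneSub (1 - u) hu1).isUnit
    rwa [Units.val_oneSub, sub_sub_cancel] at this
  have hup : u * p = q * u := by
    have e1 : u * p - q * p = (2 * q - 1) * (p * p - p) := by rw [hu_def]; noncomm_ring
    have e2 : q * u - q * p = (q * q - q) * (2 * p - 1) := by rw [hu_def]; noncomm_ring
    rw [hp2, sub_self, mul_zero, sub_eq_zero] at e1
    rw [hq2, sub_self, zero_mul, sub_eq_zero] at e2
    rw [e1, e2]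
  set a : C := star u * u with ha_def
  have ha_sa : IsSelfAdjoint a := by
    rw [IsSelfAdjoint, ha_def]; simp [star_mul]
  have ha_unit : IsUnit a := hu_unit.star.mul hu_unit
  have hpu' : p * star u = star u * q := by
    have := congrArg star hup
    simpa [star_mul, hp.star_eq, hq.star_eq] using this
  have hpa : Commute p a := by
    rw [Commute, SemiconjBy, ha_def, ← mul_assoc, hpu', mul_assoc, ← hup, mul_assoc]
  set s : C := cfc Real.sqrt a with hs_def
  have hs_sa : IsSelfAdjoint s := IsSelfAdjoint.cfc
  have hspec : ∀ t ∈ spectrum ℝ a, 0 ≤ t := spectrum_star_mul_self_nonneg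
  have hs_sq : s * s = a := by
    rw [hs_def, ← cfc_mul _ _ a Real.continuous_sqrt.continuousOn
      Real.continuous_sqrt.continuousOn]
    have e : cfc (fun t => Real.sqrt t * Real.sqrt t) a = cfc (id : ℝ → ℝ) a :=
      cfc_congr fun t ht => Real.mul_self_sqrt (hspec t ht)
    rw [e, cfc_id ℝ a]
  have hps : Commute p s := commute_cfc_s13 hpa Real.sqrt Real.continuous_sqrt
  have hsa_comm : Commute s a := by rw [← hs_sq]; exact (Commute.refl s).mul_right (Commute.refl s)
  have hsa_inv : Commute s ↑ha_unit.unit⁻¹ := by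
    refine Commute.units_inv_right ?_
    rwa [IsUnit.unit_spec]
  have h1 : s * (s * ↑ha_unit.unit⁻¹) = 1 := by
    rw [← mul_assoc, hs_sq, ha_unit.mul_val_inv]
  have h2 : (s * ↑ha_unit.unit⁻¹) * s = 1 := by
    rw [mul_assoc, (hsa_inv.symm).eq, h1]
  let us : Cˣ := ⟨s, s * ↑ha_unit.unit⁻¹, h1, h2⟩
  set s' : C := ↑us⁻¹ with hs'_def
  have hss' : s * s' = 1 := us.mul_inv
  have hs's : s' * s = 1 := us.inv_mul
  have hps' : Commute p s' := Commute.units_inv_right (u := us) hps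
  have hs'_sa : IsSelfAdjoint s' := by
    have e1 : star s' * s = 1 := by
      have := congrArg star hss'
      rwa [star_mul, hs_sa.star_eq, star_one] at this
    calc star s' = star s' * (s * s') := by rw [hss', mul_one]
      _ = s' := by rw [← mul_assoc, e1, one_mul]
  set w : C := u * s' with hw_def
  have hws : star w = s' * star u := by rw [hw_def, star_mul, hs'_sa.star_eq]
  have e1 : (s' * s') * a = 1 := by
    rw [← hs_sq]
    calc s' * s' * (s * s) = s' * (s' * s) * s := by noncomm_ring
      _ = 1 := by rw [hs's, mul_one, hs's]
  have e2 : (s' * s') * star u = ↑hu_unit.unit⁻¹ := by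
    calc s' * s' * star u = s' * s' * star u * (u * ↑hu_unit.unit⁻¹) := by
          rw [hu_unit.mul_val_inv, mul_one]
      _ = s' * s' * a * ↑hu_unit.unit⁻¹ := by rw [ha_def]; noncomm_ring
      _ = ↑hu_unit.unit⁻¹ := by rw [e1, one_mul]
  have hww : w * star w = 1 := by
    rw [hw_def, hws]
    calc u * s' * (s' * star u) = u * (s' * s' * star u) := by noncomm_ring
      _ = u * ↑hu_unit.unit⁻¹ := by rw [e2]
      _ = 1 := hu_unit.mul_val_inv
  have hw'w : star w * w = 1 := by
    rw [hw_def, hws]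
    calc s' * star u * (u * s') = s' * a * s' := by rw [ha_def]; noncomm_ring
      _ = s' * (s * s) * s' := by rw [hs_sq]
      _ = (s' * s) * (s * s') := by noncomm_ring
      _ = 1 := by rw [hs's, hss', mul_one]
  have hwpw : w * p * star w = q := by
    rw [hw_def, hws]
    calc u * s' * p * (s' * star u) = u * (s' * p) * s' * star u := by noncomm_ring
      _ = u * (p * s') * s' * star u := by rw [← hps'.eq]
      _ = (u * p) * (s' * s' * star u) := by noncomm_ring
      _ = (q * u) * ↑hu_unit.unit⁻¹ := by rw [hup, e2]
      _ = q * (u * ↑hu_unit.unit⁻¹) := by noncomm_ring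
      _ = q := by rw [hu_unit.mul_val_inv, mul_one]
  refine ⟨w * p, ?_, ?_⟩
  · rw [star_mul, hp.star_eq]
    calc p * star w * (w * p) = p * (star w * w) * p := by noncomm_ring
      _ = p * p := by rw [hw'w, mul_one]
      _ = p := hp2
  · calc w * p * star (w * p) = w * (p * p) * star w := by
          rw [star_mul, hp.star_eq]; noncomm_ring
      _ = w * p * star w := by rw [hp2]
      _ = q := hwpw

/-- the continuous surrogate for the indicator function of `[0, ∞)` -/
noncomputable def gfun (ε : ℝ) : ℝ → ℝ := fun t => min 1 (max (t / ε) 0)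

lemma gfun_cont (ε : ℝ) : Continuous (gfun ε) :=
  continuous_const.min ((continuous_id.div_const ε).max continuous_const)

lemma gfun_eq_indicator {ε t : ℝ} (hε : 0 < ε) (ht : ε ≤ |t|) :
    (if 0 ≤ t then (1:ℝ) else 0) = gfun ε t := by
  unfold gfun
  rcases le_or_gt ε t with h | h
  · rw [if_pos (by linarith)]
    have h1 : (1:ℝ) ≤ t / ε := (one_le_div hε).mpr h
    rw [max_eq_left (by linarith), min_eq_left h1]
  · have ht' : t ≤ -ε := by
      rcases abs_cases t with ⟨h1, h2⟩ | ⟨h1, h2⟩ <;> [linarith; linarith]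
    rw [if_neg (by linarith), max_eq_right (div_nonpos_of_nonpos_of_nonneg (by linarith) hε.le),
      min_eq_right zero_le_one]

lemma gfun_idem {ε t : ℝ} (hε : 0 < ε) (ht : ε ≤ |t|) :
    gfun ε t * gfun ε t = gfun ε t := by
  rw [← gfun_eq_indicator hε ht]
  by_cases h : 0 ≤ t <;> simp [h]

lemma spectrum_gap [Nontrivial C] {x : C} (hx : IsUnit x) :
    ∀ t ∈ spectrum ℝ x, (‖(↑hx.unit⁻¹ : C)‖)⁻¹ ≤ |t| := by
  intro t ht
  have ht0 : t ≠ 0 := by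
    rintro rfl
    exact spectrum.zero_notMem ℝ hx ht
  have hmem : ((Units.mk0 t ht0 : ℝˣ) : ℝ) ∈ spectrum ℝ ((hx.unit : Cˣ) : C) := by
    rwa [IsUnit.unit_spec]
  have h2 : ((((Units.mk0 t ht0)⁻¹ : ℝˣ)) : ℝ) ∈ spectrum ℝ ((↑(hx.unit⁻¹) : C)) :=
    spectrum.inv_mem_iff.mp hmem
  have h3 : ‖((((Units.mk0 t ht0)⁻¹ : ℝˣ)) : ℝ)‖ ≤ ‖(↑hx.unit⁻¹ : C)‖ :=
    spectrum.norm_le_norm_of_mem h2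
  have h4 : |t|⁻¹ ≤ ‖(↑hx.unit⁻¹ : C)‖ := by
    simpa [Real.norm_eq_abs, abs_inv] using h3
  have h5 : 0 < |t| := abs_pos.mpr ht0
  calc (‖(↑hx.unit⁻¹ : C)‖)⁻¹ ≤ (|t|⁻¹)⁻¹ := by
        apply inv_anti₀ (by positivity) h4
  _ = |t| := inv_inv _

lemma pSP_eq {x : C} {ε : ℝ} (hε : 0 < ε)
    (hgap : ∀ t ∈ spectrum ℝ x, ε ≤ |t|) :
    posSpectralProj x = cfc (gfun ε) x :=
  cfc_congr fun t ht => gfun_eq_indicator hε (hgap t ht)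

lemma pSP_sa (x : C) : IsSelfAdjoint (posSpectralProj x) := IsSelfAdjoint.cfc

lemma pSP_idem [Nontrivial C] {x : C} (hu : IsUnit x) :
    posSpectralProj x * posSpectralProj x = posSpectralProj x := by
  have hε : 0 < (‖(↑hu.unit⁻¹ : C)‖)⁻¹ := by
    have : (↑hu.unit⁻¹ : C) ≠ 0 := (hu.unit⁻¹).ne_zero
    exact inv_pos.mpr (norm_pos_iff.mpr this)
  set ε := (‖(↑hu.unit⁻¹ : C)‖)⁻¹
  rw [pSP_eq hε (spectrum_gap hu),
    ← cfc_mul _ _ x (gfun_cont ε).continuousOn (gfun_cont ε).continuousOn]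
  apply cfc_congr
  intro t ht
  exact gfun_idem hε (spectrum_gap hu t ht)

lemma MvNEquiv.symm' {p q : C} (h : MvNEquiv p q) : MvNEquiv q p := by
  obtain ⟨v, h1, h2⟩ := h
  exact ⟨star v, by rwa [star_star], by rwa [star_star]⟩

lemma mvn_trans {p q r : C} (hp2 : p * p = p) (hr2 : r * r = r)
    (h1 : MvNEquiv p q) (h2 : MvNEquiv q r) : MvNEquiv p r := by
  obtain ⟨v, hv1, hv2⟩ := h1
  obtain ⟨w, hw1, hw2⟩ := h2
  refine ⟨w * v, ?_, ?_⟩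
  · calc star (w * v) * (w * v) = star v * (star w * w) * v := by rw [star_mul]; noncomm_ring
      _ = star v * (v * star v) * v := by rw [hw1, hv2]
      _ = (star v * v) * (star v * v) := by noncomm_ring
      _ = p := by rw [hv1, hp2]
  · calc (w * v) * star (w * v) = w * (v * star v) * star w := by rw [star_mul]; noncomm_ring
      _ = w * (star w * w) * star w := by rw [hv2, hw1]
      _ = (w * star w) * (w * star w) := by noncomm_ring
      _ = r := by rw [hw2, hr2]

lemma keyLemma [Nontrivial C] {x : C} (hx : IsSelfAdjoint x) (hxu : IsUnit x) :
    ∃ η > 0, ∀ y : C, IsSelfAdjoint y → IsUnit y → ‖y - x‖ < η →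
      MvNEquiv (posSpectralProj x) (posSpectralProj y) := by
  set N : ℝ := ‖(↑hxu.unit⁻¹ : C)‖ with hN
  have hN0 : 0 < N := norm_pos_iff.mpr (hxu.unit⁻¹).ne_zero
  set ε : ℝ := N⁻¹ with hε_def
  have hε : 0 < ε := inv_pos.mpr hN0
  have hinvx : Ring.inverse x = (↑hxu.unit⁻¹ : C) := by
    have : Ring.inverse ((hxu.unit : Cˣ) : C) = (↑hxu.unit⁻¹ : C) := Ring.inverse_unit _
    rwa [IsUnit.unit_spec] at this
  have hinv : ContinuousAt Ring.inverse (x : C) := by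
    have := NormedRing.inverse_continuousAt hxu.unit
    rwa [IsUnit.unit_spec] at this
  obtain ⟨η₀, hη₀, hcont⟩ := Metric.continuousAt_iff.mp hinv N hN0
  obtain ⟨η₁, hη₁, hcfc⟩ := cfc_cont (gfun (ε/2)) (gfun_cont _) x hx (by norm_num : (0:ℝ) < 1)
  refine ⟨min η₀ η₁, lt_min hη₀ hη₁, fun y hy hyu hclose => ?_⟩
  have hgapy : ∀ t ∈ spectrum ℝ y, ε/2 ≤ |t| := by
    intro t ht
    have h1 := spectrum_gap hyu t ht
    have h2 : dist y x < η₀ := by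
      rw [dist_eq_norm]; exact lt_of_lt_of_le hclose (min_le_left _ _)
    have h3 := hcont h2
    rw [dist_eq_norm] at h3
    have hinvy : Ring.inverse y = (↑hyu.unit⁻¹ : C) := by
      have : Ring.inverse ((hyu.unit : Cˣ) : C) = (↑hyu.unit⁻¹ : C) := Ring.inverse_unit _
      rwa [IsUnit.unit_spec] at this
    have h4 : ‖(↑hyu.unit⁻¹ : C)‖ ≤ 2 * N := by
      have h5 := norm_sub_norm_le (Ring.inverse y) (Ring.inverse x)
      have h6 : ‖Ring.inverse y‖ = ‖(↑hyu.unit⁻¹ : C)‖ := by rw [hinvy]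
      have h7 : ‖Ring.inverse x‖ = N := by rw [hinvx, ← hN]
      have h8 : ‖Ring.inverse y - Ring.inverse x‖ < N := h3
      rw [h6, h7] at h5
      linarith
    have hy0 : 0 < ‖(↑hyu.unit⁻¹ : C)‖ := norm_pos_iff.mpr (hyu.unit⁻¹).ne_zero
    have h5 : (2*N)⁻¹ ≤ (‖(↑hyu.unit⁻¹ : C)‖)⁻¹ := inv_anti₀ hy0 h4
    have h6 : ε/2 = (2*N)⁻¹ := by rw [hε_def, mul_inv]; ring
    rw [h6]
    exact le_trans h5 h1
  have hgapx : ∀ t ∈ spectrum ℝ x, ε/2 ≤ |t| := fun t ht =>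
    le_trans (by linarith) (spectrum_gap hxu t ht)
  have hclose2 : ‖cfc (gfun (ε/2)) y - cfc (gfun (ε/2)) x‖ < 1 :=
    hcfc y hy (lt_of_lt_of_le hclose (min_le_right _ _))
  refine mvn_of_close (pSP_sa x) (pSP_idem hxu) (pSP_sa y) (pSP_idem hyu) ?_
  rw [pSP_eq (by linarith : (0:ℝ) < ε/2) hgapx, pSP_eq (by linarith : (0:ℝ) < ε/2) hgapy,
    norm_sub_rev]
  exact hclose2

lemma clopen_of_subsingleton {X : Type*} [TopologicalSpace X] [Subsingleton X] (s : Set X) :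
    IsClosed s ∧ IsOpen s := by
  rcases s.eq_empty_or_nonempty with rfl | ⟨a, ha⟩
  · exact ⟨isClosed_empty, isOpen_empty⟩
  · have h : s = Set.univ := Set.eq_univ_of_forall fun b => by rwa [Subsingleton.elim b a]
    rw [h]
    exact ⟨isClosed_univ, isOpen_univ⟩

end Aux

/-- Let `C` be a unital C*-algebra.  Then
`GL(C)_{SA,∞} = { x ∈ GL(C) : x = x*, 1_{≥0}(x) ∼ 1 ∼ 1_{≥0}(−x) }` is norm-closed in
`GL(C)` and relatively open in the set `GL(C)_{SA}` of self-adjoint invertibles of `C`. -/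
theorem stmt13 {C : Type*} [CStarAlgebra C] :
    IsClosed {x : {y : C // IsUnit y} |
        IsSelfAdjoint (x : C) ∧ MvNEquiv (posSpectralProj (x : C)) (1 : C) ∧
          MvNEquiv (posSpectralProj (-(x : C))) (1 : C)} ∧
    IsOpen {x : {y : C // IsUnit y ∧ IsSelfAdjoint y} |
        MvNEquiv (posSpectralProj (x : C)) (1 : C) ∧
          MvNEquiv (posSpectralProj (-(x : C))) (1 : C)} := by
  rcases subsingleton_or_nontrivial C with hS | hN
  · haveI : Subsingleton {y : C // IsUnit y} :=
      ⟨fun a b => Subtype.ext (Subsingleton.elim _ _)⟩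
    haveI : Subsingleton {y : C // IsUnit y ∧ IsSelfAdjoint y} :=
      ⟨fun a b => Subtype.ext (Subsingleton.elim _ _)⟩
    exact ⟨(clopen_of_subsingleton _).1, (clopen_of_subsingleton _).2⟩
  constructor
  · -- closed
    apply isClosed_of_closure_subset
    intro x hxcl
    have hxu : IsUnit (x : C) := x.2
    have hxsa : IsSelfAdjoint (x : C) := by
      have hcl : IsClosed {z : {y : C // IsUnit y} | IsSelfAdjoint (z : C)} :=
        isClosed_eq (continuous_star.comp continuous_subtype_val) continuous_subtype_val
      exact hcl.closure_subset_iff.mpr (fun z hz => hz.1) hxcl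
    obtain ⟨ηp, hηp, hkeyp⟩ := keyLemma hxsa hxu
    obtain ⟨ηm, hηm, hkeym⟩ := keyLemma hxsa.neg hxu.neg
    obtain ⟨y, hyS, hyd⟩ := Metric.mem_closure_iff.mp hxcl (min ηp ηm) (lt_min hηp hηm)
    have hysa : IsSelfAdjoint (y : C) := hyS.1
    obtain ⟨hy1, hy2⟩ := hyS.2
    have hyu : IsUnit (y : C) := y.2
    have hdist : ‖(y : C) - (x : C)‖ < min ηp ηm := by
      rw [← dist_eq_norm, dist_comm, ← Subtype.dist_eq]
      exact hyd
    have hone : (1 : C) * 1 = 1 := one_mul 1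
    refine ⟨hxsa, ?_, ?_⟩
    · have h1 := hkeyp (y : C) hysa hyu (lt_of_lt_of_le hdist (min_le_left _ _))
      exact mvn_trans (pSP_idem hxu) hone h1 hy1
    · have hd2 : ‖(-(y : C)) - (-(x : C))‖ < ηm := by
        rw [neg_sub_neg, norm_sub_rev]
        exact lt_of_lt_of_le hdist (min_le_right _ _)
      have h1 := hkeym (-(y : C)) hysa.neg hyu.neg hd2
      exact mvn_trans (pSP_idem hxu.neg) hone h1 hy2
  · -- open
    rw [Metric.isOpen_iff]
    intro x hx
    have hxu : IsUnit (x : C) := x.2.1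
    have hxsa : IsSelfAdjoint (x : C) := x.2.2
    obtain ⟨ηp, hηp, hkeyp⟩ := keyLemma hxsa hxu
    obtain ⟨ηm, hηm, hkeym⟩ := keyLemma hxsa.neg hxu.neg
    refine ⟨min ηp ηm, lt_min hηp hηm, fun y hyball => ?_⟩
    have hyu : IsUnit (y : C) := y.2.1
    have hysa : IsSelfAdjoint (y : C) := y.2.2
    have hdist : ‖(y : C) - (x : C)‖ < min ηp ηm := by
      rw [← dist_eq_norm, ← Subtype.dist_eq]
      exact hyball
    have hone : (1 : C) * 1 = 1 := one_mul 1
    constructor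
    · have h1 := hkeyp (y : C) hysa hyu (lt_of_lt_of_le hdist (min_le_left _ _))
      exact mvn_trans (pSP_idem hyu) hone h1.symm' hx.1
    · have hd2 : ‖(-(y : C)) - (-(x : C))‖ < ηm := by
        rw [neg_sub_neg, norm_sub_rev]
        exact lt_of_lt_of_le hdist (min_le_right _ _)
      have h1 := hkeym (-(y : C)) hysa.neg hyu.neg hd2
      exact mvn_trans (pSP_idem hyu.neg) hone h1.symm' hx.2
end

section
/- Let B be a separable stable C*-algebra. The quotient map π restricts to a homotopy equivalence from Fred_{SA}(M(B)) := { A ∈ M(B) : A = A*, π(A) invertible in C(B) } onto GL(C(B))_{SA}, the set of self-adjoint invertible elements of the corona algebra, both spaces carrying the norm topology. -/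
open scoped MultiplierAlgebra

open Set Function Filter in
theorem approx_section {X Z : Type*} [NormedAddCommGroup X] [NormedSpace ℝ X]
    [NormedAddCommGroup Z] [NormedSpace ℝ Z]
    (L : X →L[ℝ] Z) {C : ℝ} (hC0 : 0 ≤ C)
    (hC : ∀ z : Z, ∃ x : X, L x = z ∧ ‖x‖ ≤ C * ‖z‖) {ε : ℝ} (hε : 0 < ε) :
    ∃ g : Z → X, Continuous g ∧ ∀ z, ‖L (g z) - z‖ ≤ ε ∧ ‖g z‖ ≤ C * (‖z‖ + ε) := by
  choose x hx hxn using hC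
  set U : Z → Set Z := fun w => Metric.ball w ε with hU
  obtain ⟨ρ, hρ⟩ := PartitionOfUnity.exists_isSubordinate (s := (univ : Set Z)) isClosed_univ U
    (fun w => Metric.isOpen_ball) (fun z _ => mem_iUnion.2 ⟨z, Metric.mem_ball_self hε⟩)
  refine ⟨fun z => ∑ᶠ w, ρ w z • x w, ?_, fun z => ?_⟩
  · exact hρ.continuous_finsum_smul (fun w => Metric.isOpen_ball)
      (fun w => continuousOn_const)
  · have hfin : (∑ᶠ w, ρ w z • x w) = ∑ w ∈ ρ.finsupport z, ρ w z • x w :=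
      (ρ.sum_finsupport_smul_eq_finsum (fun w _ => x w)).symm
    have hone : ∑ w ∈ ρ.finsupport z, ρ w z = 1 := ρ.sum_finsupport (mem_univ z)
    have hmem : ∀ w ∈ ρ.finsupport z, dist z w < ε := by
      intro w hw
      have : z ∈ tsupport (ρ w) := subset_closure ((ρ.mem_finsupport z).1 hw)
      exact hρ w this
    have h1 : L (∑ w ∈ ρ.finsupport z, ρ w z • x w) = ∑ w ∈ ρ.finsupport z, ρ w z • w := by
      rw [map_sum]
      exact Finset.sum_congr rfl fun w hw => by rw [map_smul, hx]
    constructor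
    · have key : ∑ w ∈ ρ.finsupport z, ρ w z • (w - z)
          = L (∑ w ∈ ρ.finsupport z, ρ w z • x w) - z := by
        simp only [smul_sub]
        rw [Finset.sum_sub_distrib, ← Finset.sum_smul, hone, one_smul, h1]
      show ‖L (∑ᶠ w, ρ w z • x w) - z‖ ≤ ε
      rw [hfin, ← key]
      calc ‖∑ w ∈ ρ.finsupport z, ρ w z • (w - z)‖
          ≤ ∑ w ∈ ρ.finsupport z, ‖ρ w z • (w - z)‖ := norm_sum_le _ _
        _ ≤ ∑ w ∈ ρ.finsupport z, ρ w z * ε := by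
            refine Finset.sum_le_sum fun w hw => ?_
            rw [norm_smul, Real.norm_eq_abs, abs_of_nonneg (ρ.nonneg w z)]
            refine mul_le_mul_of_nonneg_left ?_ (ρ.nonneg w z)
            rw [← dist_eq_norm, dist_comm]
            exact (hmem w hw).le
        _ = ε := by rw [← Finset.sum_mul, hone, one_mul]
    · show ‖∑ᶠ w, ρ w z • x w‖ ≤ C * (‖z‖ + ε)
      rw [hfin]
      calc ‖∑ w ∈ ρ.finsupport z, ρ w z • x w‖
          ≤ ∑ w ∈ ρ.finsupport z, ‖ρ w z • x w‖ := norm_sum_le _ _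
        _ ≤ ∑ w ∈ ρ.finsupport z, ρ w z * (C * (‖z‖ + ε)) := by
            refine Finset.sum_le_sum fun w hw => ?_
            rw [norm_smul, Real.norm_eq_abs, abs_of_nonneg (ρ.nonneg w z)]
            refine mul_le_mul_of_nonneg_left ((hxn w).trans ?_) (ρ.nonneg w z)
            refine mul_le_mul_of_nonneg_left ?_ hC0
            calc ‖w‖ ≤ ‖z‖ + dist z w := by
                  rw [dist_comm, dist_eq_norm]
                  simpa [add_comm] using norm_add_le (w - z) z
              _ ≤ ‖z‖ + ε := by linarith [hmem w hw]
        _ = C * (‖z‖ + ε) := by rw [← Finset.sum_mul, hone, one_mul]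

open Set Function Filter in
/-- Bartle–Graves: a surjective continuous linear map between Banach spaces admits
a continuous (not necessarily linear) right inverse. -/
theorem bartleGraves {X Z : Type*} [NormedAddCommGroup X] [NormedSpace ℝ X] [CompleteSpace X]
    [NormedAddCommGroup Z] [NormedSpace ℝ Z] [CompleteSpace Z]
    (L : X →L[ℝ] Z) (hs : Function.Surjective L) :
    ∃ g : Z → X, Continuous g ∧ ∀ z, L (g z) = z := by
  obtain ⟨C, hC0, hC⟩ := L.exists_preimage_norm_le hs
  have happrox : ∀ n : ℕ, ∃ g : Z → X, Continuous g ∧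
      ∀ z, ‖L (g z) - z‖ ≤ (2:ℝ)⁻¹ ^ n ∧ ‖g z‖ ≤ C * (‖z‖ + (2:ℝ)⁻¹ ^ n) :=
    fun n => approx_section L hC0.le hC (by positivity)
  choose G hGc hG using happrox
  -- the iterative sequence
  let f : ℕ → Z → X := fun n => Nat.rec (G 0)
    (fun n fn => fun z => fn z + G (n + 1) (z - L (fn z))) n
  have hf0 : f 0 = G 0 := rfl
  have hfs : ∀ n, f (n + 1) = fun z => f n z + G (n + 1) (z - L (f n z)) := fun n => rfl
  have hcont : ∀ n, Continuous (f n) := by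
    intro n
    induction n with
    | zero => exact hGc 0
    | succ n ih =>
      rw [hfs]
      exact ih.add ((hGc (n + 1)).comp (continuous_id.sub (L.continuous.comp ih)))
  have herr : ∀ n z, ‖L (f n z) - z‖ ≤ (2:ℝ)⁻¹ ^ n := by
    intro n
    induction n with
    | zero => intro z; rw [hf0]; simpa using (hG 0 z).1
    | succ n ih =>
      intro z
      rw [hfs]
      show ‖L (f n z + G (n + 1) (z - L (f n z))) - z‖ ≤ (2:ℝ)⁻¹ ^ (n + 1)
      have harg : L (f n z + G (n + 1) (z - L (f n z))) - z
          = L (G (n + 1) (z - L (f n z))) - (z - L (f n z)) := by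
        rw [map_add]; abel
      rw [harg]
      exact (hG (n + 1) _).1
  -- increments
  set d : ℕ → Z → X := fun n z => f (n + 1) z - f n z with hd
  have hdc : ∀ n, Continuous (d n) := fun n => (hcont (n + 1)).sub (hcont n)
  have hdb : ∀ n z, ‖d n z‖ ≤ 2 * C * (2:ℝ)⁻¹ ^ n := by
    intro n z
    have he : ‖z - L (f n z)‖ ≤ (2:ℝ)⁻¹ ^ n := by
      rw [norm_sub_rev]; exact herr n z
    have : d n z = G (n + 1) (z - L (f n z)) := by
      simp only [hd, hfs]; abel
    rw [this]
    calc ‖G (n + 1) (z - L (f n z))‖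
        ≤ C * (‖z - L (f n z)‖ + (2:ℝ)⁻¹ ^ (n + 1)) := (hG (n + 1) _).2
      _ ≤ C * ((2:ℝ)⁻¹ ^ n + (2:ℝ)⁻¹ ^ (n + 1)) := by
          refine mul_le_mul_of_nonneg_left (by linarith) hC0.le
      _ ≤ 2 * C * (2:ℝ)⁻¹ ^ n := by
          rw [pow_succ]
          have h2 : (0:ℝ) < (2:ℝ)⁻¹ ^ n := by positivity
          nlinarith
  have hu : Summable (fun n : ℕ => 2 * C * (2:ℝ)⁻¹ ^ n) :=
    (summable_geometric_of_lt_one (by norm_num) (by norm_num)).mul_left _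
  have hsum : ∀ z, Summable (fun n => d n z) := fun z =>
    Summable.of_norm_bounded hu (fun n => hdb n z)
  set T : Z → X := fun z => ∑' n, d n z with hT
  have hTc : Continuous T := continuous_tsum hdc hu (fun n z => hdb n z)
  refine ⟨fun z => f 0 z + T z, (hcont 0).add hTc, fun z => ?_⟩
  have htend : Tendsto (fun N => f N z) atTop (nhds (f 0 z + T z)) := by
    have h1 : Tendsto (fun N => ∑ i ∈ Finset.range N, d i z) atTop (nhds (T z)) :=
      (hsum z).hasSum.tendsto_sum_nat
    have h2 : ∀ N, ∑ i ∈ Finset.range N, d i z = f N z - f 0 z := fun N =>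
      Finset.sum_range_sub (fun n => f n z) N
    have h3 : Tendsto (fun N => f 0 z + (f N z - f 0 z)) atTop (nhds (f 0 z + T z)) := by
      refine Tendsto.const_add _ ?_
      simpa only [h2] using h1
    simpa using h3
  have hL1 : Tendsto (fun N => L (f N z)) atTop (nhds (L (f 0 z + T z))) :=
    (L.continuous.tendsto _).comp htend
  have hL2 : Tendsto (fun N => L (f N z)) atTop (nhds z) := by
    have h0 : Tendsto (fun N => L (f N z) - z) atTop (nhds 0) :=
      squeeze_zero_norm (fun n => herr n z)
        (tendsto_pow_atTop_nhds_zero_of_lt_one (by norm_num) (by norm_num))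
    simpa using h0.add_const z
  exact tendsto_nhds_unique hL1 hL2

set_option maxHeartbeats 1000000

/-- Let `B` be a separable stable C*-algebra, `π : M(B) → C(B)` the corona
quotient map (encoded as a surjective `*`-homomorphism onto a unital C*-algebra `Q` with
kernel the canonical ideal `B`).  Then `π` restricts to a homotopy equivalence from
`Fred_{SA}(M(B)) = { A : A = A*, π(A) invertible }` onto the space `GL(Q)_{SA}` of
self-adjoint invertibles of the corona, both with the norm topology. -/
theorem stmt14 {B Q : Type*} [NonUnitalCStarAlgebra B] [TopologicalSpace.SeparableSpace B]
    [CStarAlgebra Q] (hstable : IsStable B)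
    (π : 𝓜(ℂ, B) →⋆ₐ[ℂ] Q) (hπ : Function.Surjective π)
    (hker : ∀ m : 𝓜(ℂ, B), π m = 0 ↔ inCanonicalIdeal m) :
    ∃ h : ContinuousMap.HomotopyEquiv
        {A : 𝓜(ℂ, B) // IsSelfAdjoint A ∧ IsUnit (π A)}
        {y : Q // IsSelfAdjoint y ∧ IsUnit y},
      ∀ A : {A : 𝓜(ℂ, B) // IsSelfAdjoint A ∧ IsUnit (π A)},
        ((h.toFun A : {y : Q // IsSelfAdjoint y ∧ IsUnit y}) : Q) = π (A : 𝓜(ℂ, B)) := by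
  clear hstable hker
  -- π as a real continuous linear map
  let L : 𝓜(ℂ, B) →L[ℝ] Q :=
    { toLinearMap := π.toLinearMap.restrictScalars ℝ,
      cont := AddMonoidHomClass.continuous_of_bound π 1
        (fun a => by simpa using NonUnitalStarAlgHom.norm_apply_le π a) }
  have hLπ : ∀ x, L x = π x := fun x => rfl
  obtain ⟨g, hgc, hg⟩ := bartleGraves L hπ
  -- symmetrized continuous section
  have hσpack : ∃ σ : Q → 𝓜(ℂ, B), Continuous σ ∧ (∀ y, IsSelfAdjoint (σ y)) ∧
      ∀ y : Q, IsSelfAdjoint y → π (σ y) = y := by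
    refine ⟨fun y => (2:ℝ)⁻¹ • (g y + star (g y)),
      by exact (hgc.add (continuous_star.comp hgc)).const_smul ((2:ℝ)⁻¹), fun y => ?_, fun y hy => ?_⟩
    · rw [IsSelfAdjoint, star_smul, star_trivial, star_add, star_star, add_comm]
    · have : π ((2:ℝ)⁻¹ • (g y + star (g y))) = L ((2:ℝ)⁻¹ • (g y + star (g y))) := rfl
      rw [this]
      simp only [map_smul, map_add]
      have hstar : L (star (g y)) = star (L (g y)) := by
        show π (star (g y)) = star (π (g y)); exact map_star π (g y)
      rw [hstar, hg y, hy.star_eq, smul_add, ← add_smul]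
      norm_num
  obtain ⟨σ, hσc, hσsa, hσπ⟩ := hσpack
  -- the two spaces
  have hπcont : Continuous (fun A : {A : 𝓜(ℂ, B) // IsSelfAdjoint A ∧ IsUnit (π A)} => π A.1) := by
    show Continuous fun A : {A : 𝓜(ℂ, B) // IsSelfAdjoint A ∧ IsUnit (π A)} => L A.1
    exact L.continuous.comp continuous_subtype_val
  let fwd : C({A : 𝓜(ℂ, B) // IsSelfAdjoint A ∧ IsUnit (π A)}, {y : Q // IsSelfAdjoint y ∧ IsUnit y}) :=
    ⟨fun A => ⟨π A.1, A.2.1.map π, A.2.2⟩, hπcont.subtype_mk _⟩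
  let bwd : C({y : Q // IsSelfAdjoint y ∧ IsUnit y}, {A : 𝓜(ℂ, B) // IsSelfAdjoint A ∧ IsUnit (π A)}) :=
    ⟨fun y => ⟨σ y.1, hσsa _, by rw [hσπ y.1 y.2.1]; exact y.2.2⟩,
      (hσc.comp continuous_subtype_val).subtype_mk _⟩
  -- the straight-line homotopy data
  have hsa : ∀ (t : unitInterval) (A : {A : 𝓜(ℂ, B) // IsSelfAdjoint A ∧ IsUnit (π A)}),
      IsSelfAdjoint (((1:ℝ) - (t : ℝ)) • σ (π A.1) + (t : ℝ) • A.1) := by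
    intro t A
    have h1 := (hσsa (π A.1)).star_eq
    have h2 := A.2.1.star_eq
    rw [IsSelfAdjoint, star_add, star_smul, star_smul, h1, h2, star_trivial, star_trivial]
  have hkey : ∀ (t : unitInterval) (A : {A : 𝓜(ℂ, B) // IsSelfAdjoint A ∧ IsUnit (π A)}),
      π (((1:ℝ) - (t : ℝ)) • σ (π A.1) + (t : ℝ) • A.1) = π A.1 := by
    intro t A
    show L (((1:ℝ) - (t : ℝ)) • σ (π A.1) + (t : ℝ) • A.1) = π A.1
    rw [map_add, map_smul, map_smul, hLπ, hLπ, hσπ (π A.1) (A.2.1.map π), ← add_smul,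
      sub_add_cancel, one_smul]
  have hHc : Continuous (fun p : unitInterval × {A : 𝓜(ℂ, B) // IsSelfAdjoint A ∧ IsUnit (π A)} =>
      ((1:ℝ) - (p.1 : ℝ)) • σ (π p.2.1) + (p.1 : ℝ) • (p.2.1 : 𝓜(ℂ, B))) := by
    have ht : Continuous (fun p : unitInterval × {A : 𝓜(ℂ, B) // IsSelfAdjoint A ∧ IsUnit (π A)} =>
        (p.1 : ℝ)) := continuous_subtype_val.comp continuous_fst
    have hv : Continuous (fun p : unitInterval × {A : 𝓜(ℂ, B) // IsSelfAdjoint A ∧ IsUnit (π A)} =>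
        (p.2.1 : 𝓜(ℂ, B))) := continuous_subtype_val.comp continuous_snd
    have hσp : Continuous (fun p : unitInterval × {A : 𝓜(ℂ, B) // IsSelfAdjoint A ∧ IsUnit (π A)} =>
        σ (π p.2.1)) := by
      show Continuous fun p : unitInterval × {A : 𝓜(ℂ, B) // IsSelfAdjoint A ∧ IsUnit (π A)} =>
        σ (L p.2.1)
      exact hσc.comp (L.continuous.comp hv)
    exact ((continuous_const.sub ht).smul hσp).add (ht.smul hv)
  let Hmap : C(unitInterval × {A : 𝓜(ℂ, B) // IsSelfAdjoint A ∧ IsUnit (π A)},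
      {A : 𝓜(ℂ, B) // IsSelfAdjoint A ∧ IsUnit (π A)}) :=
    ⟨fun p => ⟨((1:ℝ) - (p.1 : ℝ)) • σ (π p.2.1) + (p.1 : ℝ) • p.2.1,
      hsa p.1 p.2, by rw [hkey]; exact p.2.2.2⟩, hHc.subtype_mk _⟩
  let H : ContinuousMap.Homotopy (bwd.comp fwd)
      (ContinuousMap.id {A : 𝓜(ℂ, B) // IsSelfAdjoint A ∧ IsUnit (π A)}) :=
    { toContinuousMap := Hmap,
      map_zero_left := fun A => Subtype.ext <| by
        show ((1:ℝ) - ((0 : unitInterval) : ℝ)) • σ (π A.1) + ((0 : unitInterval) : ℝ) • A.1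
          = σ (π A.1)
        simp,
      map_one_left := fun A => Subtype.ext <| by
        show ((1:ℝ) - ((1 : unitInterval) : ℝ)) • σ (π A.1) + ((1 : unitInterval) : ℝ) • A.1
          = A.1
        simp }
  have hright : fwd.comp bwd = ContinuousMap.id {y : Q // IsSelfAdjoint y ∧ IsUnit y} :=
    ContinuousMap.ext fun y => Subtype.ext (hσπ y.1 y.2.1)
  exact ⟨⟨fwd, bwd, ⟨H⟩, hright ▸ ContinuousMap.Homotopic.refl _⟩, fun A => rfl⟩
end
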